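/- arXiv:1503.02615 — 4 statements merged into one kernel-verified Lean document; each statement's English description precedes it below -/
import Mathlib

section
/- Let M1 ∈ ℝ^{n1×n1}, M2 ∈ ℝ^{n2×n2}, Q ∈ ℝ^{n1×m}, P ∈ ℝ^{n2×m}, T1, T2 ∈ ℝ^{m×m}, vectors q ∈ ℝ^{n1}, p ∈ ℝ^{n2}, and scalars t1, t2 ∈ ℝ. Suppose the Arnoldi-type relations M1·Q = Q·T1 + t1·q·e_m^T and M2·P = P·T2 + t2·p·e_m^T hold, where e_m is the m-th standard basis vector of ℝ^m. Then (M2 ⊗ I_{n1} + I_{n2} ⊗ M1)(P ⊗ Q) = (P ⊗ Q)(T2 ⊗ I_m + I_m ⊗ T1) + (t2·p·e_m^T) ⊗ Q + P ⊗ (t1·q·e_m^T). -/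
open Matrix
open scoped Kronecker

/-- Arnoldi-type relations for `M1, M2` imply the structured relation for
the Kronecker sum `M2 ⊗ I + I ⊗ M1` applied to `P ⊗ Q`. Here the approximation spaces have
dimension `m + 1`, and `e` is the last (i.e. `(m+1)`-st) standard basis vector of `ℝ^(m+1)`. -/
theorem kronecker_sum_arnoldi_relation {n1 n2 m : ℕ}
    (M1 : Matrix (Fin n1) (Fin n1) ℝ) (M2 : Matrix (Fin n2) (Fin n2) ℝ)
    (Q : Matrix (Fin n1) (Fin (m + 1)) ℝ) (P : Matrix (Fin n2) (Fin (m + 1)) ℝ)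
    (T1 T2 : Matrix (Fin (m + 1)) (Fin (m + 1)) ℝ)
    (q : Fin n1 → ℝ) (p : Fin n2 → ℝ) (t1 t2 : ℝ)
    (e : Fin (m + 1) → ℝ) (he : e = Pi.single (Fin.last m) 1)
    (h1 : M1 * Q = Q * T1 + t1 • vecMulVec q e)
    (h2 : M2 * P = P * T2 + t2 • vecMulVec p e) :
    (M2 ⊗ₖ (1 : Matrix (Fin n1) (Fin n1) ℝ) + (1 : Matrix (Fin n2) (Fin n2) ℝ) ⊗ₖ M1) *
        (P ⊗ₖ Q) =
      (P ⊗ₖ Q) *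
          (T2 ⊗ₖ (1 : Matrix (Fin (m + 1)) (Fin (m + 1)) ℝ) +
            (1 : Matrix (Fin (m + 1)) (Fin (m + 1)) ℝ) ⊗ₖ T1) +
        (t2 • vecMulVec p e) ⊗ₖ Q + P ⊗ₖ (t1 • vecMulVec q e) := by
  rw [Matrix.add_mul, ← Matrix.mul_kronecker_mul, ← Matrix.mul_kronecker_mul, h1, h2]
  simp only [Matrix.add_kronecker, Matrix.kronecker_add, Matrix.mul_add,
    ← Matrix.mul_kronecker_mul, Matrix.one_mul, Matrix.mul_one]
  abel
end

section
/- Let T1, T2 ∈ ℝ^{m×m}, Q ∈ ℝ^{n1×m}, P ∈ ℝ^{n2×m}, b1 ∈ ℝ^{n1}, b2 ∈ ℝ^{n2}. Then (P ⊗ Q) · exp(T2 ⊗ I_m + I_m ⊗ T1) · (P ⊗ Q)^T · vec(b1 b2^T) = vec( (Q exp(T1) Q^T b1) · (P exp(T2) P^T b2)^T ). In other words, the structured approximation x_m^⊗ to exp(𝒜)b is the vectorization of the rank-one outer product of the two separate Krylov approximations of exp(M1)b1 and exp(M2)b2. -/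
open Matrix
open scoped Kronecker

/-- `vec` stacks the columns of a matrix one after the other: the entry of `vec X`
indexed by the pair (column index, row index) `(j, i)` is `X i j`. -/
def vec {n m : ℕ} (X : Matrix (Fin n) (Fin m) ℝ) : Fin m × Fin n → ℝ :=
  fun p => X p.2 p.1

noncomputable def kronR (m : ℕ) :
    Matrix (Fin m) (Fin m) ℝ →ₐ[ℝ] Matrix (Fin m × Fin m) (Fin m × Fin m) ℝ where
  toFun A := A ⊗ₖ (1 : Matrix (Fin m) (Fin m) ℝ)
  map_one' := Matrix.one_kronecker_one
  map_mul' A B := by rw [← Matrix.mul_kronecker_mul, Matrix.one_mul]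
  map_zero' := Matrix.zero_kronecker _
  map_add' A B := Matrix.add_kronecker A B _
  commutes' r := by
    simp only [Algebra.algebraMap_eq_smul_one]
    rw [Matrix.smul_kronecker, Matrix.one_kronecker_one]

noncomputable def kronL (m : ℕ) :
    Matrix (Fin m) (Fin m) ℝ →ₐ[ℝ] Matrix (Fin m × Fin m) (Fin m × Fin m) ℝ where
  toFun A := (1 : Matrix (Fin m) (Fin m) ℝ) ⊗ₖ A
  map_one' := Matrix.one_kronecker_one
  map_mul' A B := by rw [← Matrix.mul_kronecker_mul, Matrix.one_mul]
  map_zero' := Matrix.kronecker_zero _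
  map_add' A B := Matrix.kronecker_add _ A B
  commutes' r := by
    simp only [Algebra.algebraMap_eq_smul_one]
    rw [Matrix.kronecker_smul, Matrix.one_kronecker_one]

theorem exp_kron_sum {m : ℕ} (T1 T2 : Matrix (Fin m) (Fin m) ℝ) :
    NormedSpace.exp (T2 ⊗ₖ (1 : Matrix (Fin m) (Fin m) ℝ) +
        (1 : Matrix (Fin m) (Fin m) ℝ) ⊗ₖ T1) =
      (NormedSpace.exp T2) ⊗ₖ (NormedSpace.exp T1) := by
  letI : SeminormedRing (Matrix (Fin m) (Fin m) ℝ) := Matrix.linftyOpSemiNormedRing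
  letI : NormedRing (Matrix (Fin m) (Fin m) ℝ) := Matrix.linftyOpNormedRing
  letI : NormedAlgebra ℝ (Matrix (Fin m) (Fin m) ℝ) := Matrix.linftyOpNormedAlgebra
  letI : SeminormedRing (Matrix (Fin m × Fin m) (Fin m × Fin m) ℝ) :=
    Matrix.linftyOpSemiNormedRing
  letI : NormedRing (Matrix (Fin m × Fin m) (Fin m × Fin m) ℝ) := Matrix.linftyOpNormedRing
  letI : NormedAlgebra ℝ (Matrix (Fin m × Fin m) (Fin m × Fin m) ℝ) :=
    Matrix.linftyOpNormedAlgebra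
  letI : NormedAlgebra ℚ (Matrix (Fin m) (Fin m) ℝ) := Matrix.linftyOpNormedAlgebra (R := ℚ)
  letI : NormedAlgebra ℚ (Matrix (Fin m × Fin m) (Fin m × Fin m) ℝ) :=
    Matrix.linftyOpNormedAlgebra (R := ℚ)
  haveI : CompleteSpace (Matrix (Fin m) (Fin m) ℝ) := FiniteDimensional.complete ℝ _
  haveI : CompleteSpace (Matrix (Fin m × Fin m) (Fin m × Fin m) ℝ) :=
    FiniteDimensional.complete ℝ _
  have hcomm : Commute (T2 ⊗ₖ (1 : Matrix (Fin m) (Fin m) ℝ))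
      ((1 : Matrix (Fin m) (Fin m) ℝ) ⊗ₖ T1) := by
    unfold Commute SemiconjBy
    rw [← Matrix.mul_kronecker_mul, ← Matrix.mul_kronecker_mul, Matrix.one_mul,
      Matrix.mul_one, Matrix.one_mul, Matrix.mul_one]
  have h1 : Continuous (kronR m) := (kronR m).toLinearMap.continuous_of_finiteDimensional
  have h2 : Continuous (kronL m) := (kronL m).toLinearMap.continuous_of_finiteDimensional
  refine (NormedSpace.exp_add_of_commute hcomm).trans ?_
  have e1 : NormedSpace.exp (T2 ⊗ₖ (1 : Matrix (Fin m) (Fin m) ℝ)) =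
      (NormedSpace.exp T2) ⊗ₖ (1 : Matrix (Fin m) (Fin m) ℝ) :=
    (NormedSpace.map_exp (kronR m) h1 T2).symm
  have e2 : NormedSpace.exp ((1 : Matrix (Fin m) (Fin m) ℝ) ⊗ₖ T1) =
      (1 : Matrix (Fin m) (Fin m) ℝ) ⊗ₖ (NormedSpace.exp T1) :=
    (NormedSpace.map_exp (kronL m) h2 T1).symm
  erw [e1, e2, ← Matrix.mul_kronecker_mul, Matrix.mul_one, Matrix.one_mul]

theorem kron_mulVec_vec {n1 n2 p1 p2 : ℕ}
    (A : Matrix (Fin n2) (Fin p2) ℝ) (B : Matrix (Fin n1) (Fin p1) ℝ)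
    (v1 : Fin p1 → ℝ) (v2 : Fin p2 → ℝ) :
    (A ⊗ₖ B) *ᵥ _root_.vec (vecMulVec v1 v2) = _root_.vec (vecMulVec (B *ᵥ v1) (A *ᵥ v2)) := by
  ext ⟨j, i⟩
  simp only [Matrix.mulVec, dotProduct, _root_.vec, Matrix.vecMulVec_apply,
    Matrix.kroneckerMap_apply, Fintype.sum_prod_type, Finset.sum_mul, Finset.mul_sum]
  refine Finset.sum_congr rfl fun l _ => Finset.sum_congr rfl fun k _ => ?_
  ring


/-- The structured approximation
`x_m^⊗ = (P ⊗ Q) exp(T2 ⊗ I_m + I_m ⊗ T1) (P ⊗ Q)ᵀ vec(b1 b2ᵀ)` equals the vectorization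
of the rank-one outer product of the two separate approximations
`Q exp(T1) Qᵀ b1` and `P exp(T2) Pᵀ b2`. -/
theorem structured_exp_approx_is_outer_product {n1 n2 m : ℕ}
    (T1 T2 : Matrix (Fin m) (Fin m) ℝ)
    (Q : Matrix (Fin n1) (Fin m) ℝ) (P : Matrix (Fin n2) (Fin m) ℝ)
    (b1 : Fin n1 → ℝ) (b2 : Fin n2 → ℝ) :
    (P ⊗ₖ Q) *ᵥ
        (NormedSpace.exp
            (T2 ⊗ₖ (1 : Matrix (Fin m) (Fin m) ℝ) +
              (1 : Matrix (Fin m) (Fin m) ℝ) ⊗ₖ T1) *ᵥ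
          ((P ⊗ₖ Q)ᵀ *ᵥ _root_.vec (vecMulVec b1 b2))) =
      _root_.vec (vecMulVec (Q *ᵥ (NormedSpace.exp T1 *ᵥ (Qᵀ *ᵥ b1)))
        (P *ᵥ (NormedSpace.exp T2 *ᵥ (Pᵀ *ᵥ b2)))) := by
  rw [exp_kron_sum, ← Matrix.kroneckerMap_transpose, kron_mulVec_vec,
    kron_mulVec_vec, kron_mulVec_vec]
end

section
/- Let μ be a nonnegative Borel measure on (0,∞), let M ∈ ℝ^{n×n} be symmetric positive definite with smallest eigenvalue λ_min > 0, let P ∈ ℝ^{n×m} satisfy P^T P = I_m, set T = P^T M P, let b1 ∈ ℝ^n with ‖b1‖ = 1 and b = vec(b1 b1^T). Set 𝒜 = M ⊗ I_n + I_n ⊗ M and 𝒯_m = T ⊗ I_m + I_m ⊗ T. Assume ∫_0^∞ e^{−2 λ_min τ} dμ(τ) < ∞. Then the Laplace–Stieltjes matrix function applied to b, f(𝒜)b := ∫_0^∞ exp(−τ 𝒜) b dμ(τ), and its structured approximation x_m^⊗ := (P ⊗ P) (∫_0^∞ exp(−τ 𝒯_m) dμ(τ)) (P ⊗ P)^T b,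 satisfy ‖f(𝒜)b − x_m^⊗‖ ≤ 2 ∫_0^∞ ‖exp(−τ(M + λ_min I_n)) b1 − P exp(−τ(T + λ_min I_m)) P^T b1‖ dμ(τ). -/
open Matrix MeasureTheory
open scoped Kronecker

attribute [local instance] Matrix.normedAddCommGroup Matrix.normedSpace

/-- `vecCols` stacks the columns of a matrix one after the other. -/
def vecCols {n m : ℕ} (X : Matrix (Fin n) (Fin m) ℝ) : Fin m × Fin n → ℝ :=
  fun p => X p.2 p.1

/-- The Euclidean norm of a vector. -/
noncomputable def eucNorm {ι : Type*} [Fintype ι] (x : ι → ℝ) : ℝ :=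
  Real.sqrt (∑ i, x i ^ 2)

set_option linter.unusedSectionVars false
namespace Aux

variable {ι κ : Type*} [Fintype ι] [Fintype κ]

/-- identification with EuclideanSpace -/
noncomputable def toE (x : ι → ℝ) : EuclideanSpace ℝ ι := (WithLp.equiv 2 _).symm x

lemma enorm_eq (x : ι → ℝ) : eucNorm x = ‖toE x‖ := by
  rw [EuclideanSpace.norm_eq]
  simp [eucNorm, toE, sq_abs]

lemma toE_add (x y : ι → ℝ) : toE (x + y) = toE x + toE y := rfl
lemma toE_sub (x y : ι → ℝ) : toE (x - y) = toE x - toE y := rfl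
lemma toE_smul (c : ℝ) (x : ι → ℝ) : toE (c • x) = c • toE x := rfl

lemma enorm_nonneg (x : ι → ℝ) : 0 ≤ eucNorm x := Real.sqrt_nonneg _

lemma enorm_smul (c : ℝ) (x : ι → ℝ) : eucNorm (c • x) = |c| * eucNorm x := by
  rw [enorm_eq, enorm_eq, toE_smul, norm_smul, Real.norm_eq_abs]

lemma enorm_sub_le (x y z : ι → ℝ) : eucNorm (x - z) ≤ eucNorm (x - y) + eucNorm (y - z) := by
  rw [enorm_eq, enorm_eq, enorm_eq, toE_sub, toE_sub, toE_sub]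
  exact norm_sub_le_norm_sub_add_norm_sub _ _ _

lemma inner_toE (x y : ι → ℝ) : (inner ℝ (toE x) (toE y) : ℝ) = x ⬝ᵥ y := by
  simp [toE, PiLp.inner_apply, dotProduct, RCLike.inner_apply, mul_comm]

lemma enorm_sq (x : ι → ℝ) : eucNorm x ^ 2 = x ⬝ᵥ x := by
  rw [enorm_eq, ← inner_toE, real_inner_self_eq_norm_sq]

lemma dotProduct_le (x y : ι → ℝ) : x ⬝ᵥ y ≤ eucNorm x * eucNorm y := by
  rw [enorm_eq, enorm_eq, ← inner_toE]; exact real_inner_le_norm _ _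

end Aux

namespace Aux2
open Aux

variable {N m : ℕ}

lemma enorm_mulVec_orth (P : Matrix (Fin N) (Fin m) ℝ) (hP : Pᵀ * P = 1) (y : Fin m → ℝ) :
    eucNorm (P *ᵥ y) = eucNorm y := by
  have h : (P *ᵥ y) ⬝ᵥ (P *ᵥ y) = y ⬝ᵥ y := by
    rw [dotProduct_mulVec, ← Matrix.mulVec_transpose]
    rw [Matrix.mulVec_mulVec, hP, Matrix.one_mulVec]
  unfold eucNorm
  congr 1
  simpa [dotProduct, sq] using h

lemma enorm_transpose_mulVec_le (P : Matrix (Fin N) (Fin m) ℝ) (hP : Pᵀ * P = 1)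
    (x : Fin N → ℝ) : eucNorm (Pᵀ *ᵥ x) ≤ eucNorm x := by
  have key : eucNorm (Pᵀ *ᵥ x) ^ 2 ≤ eucNorm (Pᵀ *ᵥ x) * eucNorm x := by
    rw [enorm_sq]
    have : (Pᵀ *ᵥ x) ⬝ᵥ (Pᵀ *ᵥ x) = (P *ᵥ (Pᵀ *ᵥ x)) ⬝ᵥ x := by
      rw [dotProduct_mulVec, ← Matrix.mulVec_transpose, Matrix.transpose_transpose]
    rw [this]
    calc (P *ᵥ (Pᵀ *ᵥ x)) ⬝ᵥ x ≤ eucNorm (P *ᵥ (Pᵀ *ᵥ x)) * eucNorm x := dotProduct_le _ _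
    _ = eucNorm (Pᵀ *ᵥ x) * eucNorm x := by rw [enorm_mulVec_orth P hP]
  rcases eq_or_lt_of_le (enorm_nonneg (Pᵀ *ᵥ x)) with h0 | h0
  · rw [← h0]; exact enorm_nonneg x
  · rw [sq] at key
    exact le_of_mul_le_mul_left key h0

lemma enorm_diagonal_mulVec_le {d : Fin N → ℝ} {K : ℝ} (hK : 0 ≤ K)
    (hd : ∀ i, |d i| ≤ K) (z : Fin N → ℝ) :
    eucNorm (Matrix.diagonal d *ᵥ z) ≤ K * eucNorm z := by
  unfold eucNorm
  rw [← Real.sqrt_sq hK, ← Real.sqrt_mul (by positivity)]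
  apply Real.sqrt_le_sqrt
  rw [Finset.mul_sum]
  apply Finset.sum_le_sum
  intro i _
  have : Matrix.diagonal d *ᵥ z = fun i => d i * z i := by
    funext i; simp [Matrix.mulVec_diagonal]
  rw [this]
  have h1 : (d i * z i) ^ 2 = d i ^ 2 * z i ^ 2 := by ring
  rw [h1]
  have : d i ^ 2 ≤ K ^ 2 := by
    rw [← sq_abs (d i)]; exact pow_le_pow_left₀ (abs_nonneg _) (hd i) 2
  nlinarith [sq_nonneg (z i)]

end Aux2

namespace Aux3
open Aux Aux2

variable {N : ℕ}

lemma star_eq_transpose (A : Matrix (Fin N) (Fin N) ℝ) : star A = Aᵀ := by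
  simp [Matrix.star_eq_conjTranspose]

lemma spectral {S : Matrix (Fin N) (Fin N) ℝ} (hS : S.IsHermitian) :
    S = hS.eigenvectorUnitary.1 * Matrix.diagonal hS.eigenvalues * star hS.eigenvectorUnitary.1 := by
  have := hS.spectral_theorem
  rw [Unitary.conjStarAlgAut_apply] at this
  exact this

lemma exp_smul_hermitian {S : Matrix (Fin N) (Fin N) ℝ} (hS : S.IsHermitian) (τ : ℝ) :
    NormedSpace.exp ((-τ) • S) =
      hS.eigenvectorUnitary.1 *
        Matrix.diagonal (fun i => Real.exp (-τ * hS.eigenvalues i)) *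
        star hS.eigenvectorUnitary.1 := by
  set V := hS.eigenvectorUnitary.1 with hV
  have hU : V * star V = 1 := hS.eigenvectorUnitary.2.2
  have hU' : star V * V = 1 := hS.eigenvectorUnitary.2.1
  set Uu : (Matrix (Fin N) (Fin N) ℝ)ˣ := ⟨V, star V, hU, hU'⟩ with hUu
  have h1 : (-τ) • S = (Uu : Matrix (Fin N) (Fin N) ℝ) *
      Matrix.diagonal ((-τ) • hS.eigenvalues) * (↑Uu⁻¹ : Matrix (Fin N) (Fin N) ℝ) := by
    rw [Matrix.diagonal_smul]
    have : ((↑Uu⁻¹ : Matrix (Fin N) (Fin N) ℝ)) = star V := rfl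
    rw [this]
    rw [mul_smul_comm, smul_mul_assoc]
    exact congrArg _ (spectral hS)
  rw [h1, Matrix.exp_units_conj, Matrix.exp_diagonal, Pi.exp_def]
  have : (fun i => NormedSpace.exp (((-τ) • hS.eigenvalues) i))
      = fun i => Real.exp (-τ * hS.eigenvalues i) := by
    funext i; rw [Real.exp_eq_exp_ℝ]; rfl
  rw [this]
  rfl

lemma enorm_exp_mulVec_le {S : Matrix (Fin N) (Fin N) ℝ} (hS : S.IsHermitian)
    {lam τ : ℝ} (hle : ∀ i, lam ≤ hS.eigenvalues i) (hτ : 0 ≤ τ) (x : Fin N → ℝ) :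
    eucNorm (NormedSpace.exp ((-τ) • S) *ᵥ x) ≤ Real.exp (-(lam * τ)) * eucNorm x := by
  set V := hS.eigenvectorUnitary.1 with hV
  have hU : V * star V = 1 := hS.eigenvectorUnitary.2.2
  have hU' : star V * V = 1 := hS.eigenvectorUnitary.2.1
  rw [exp_smul_hermitian hS τ]
  rw [← Matrix.mulVec_mulVec, ← Matrix.mulVec_mulVec]
  have hVorth : Vᵀ * V = 1 := by rw [← star_eq_transpose]; exact hU'
  have hVTorth : (star V)ᵀ * star V = 1 := by
    rw [star_eq_transpose, Matrix.transpose_transpose]; exact hU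
  rw [enorm_mulVec_orth V hVorth]
  calc eucNorm (Matrix.diagonal (fun i => Real.exp (-τ * hS.eigenvalues i)) *ᵥ (star V *ᵥ x))
      ≤ Real.exp (-(lam * τ)) * eucNorm (star V *ᵥ x) := by
        apply enorm_diagonal_mulVec_le (Real.exp_nonneg _)
        intro i
        rw [abs_of_nonneg (Real.exp_nonneg _)]
        apply Real.exp_le_exp.mpr
        rw [neg_mul]
        have := mul_le_mul_of_nonneg_left (hle i) hτ
        nlinarith
    _ = Real.exp (-(lam * τ)) * eucNorm x := by
        rw [enorm_mulVec_orth (star V) hVTorth]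

lemma quad_lower {S : Matrix (Fin N) (Fin N) ℝ} (hS : S.IsHermitian)
    {lam : ℝ} (hle : ∀ i, lam ≤ hS.eigenvalues i) (x : Fin N → ℝ) :
    lam * eucNorm x ^ 2 ≤ x ⬝ᵥ (S *ᵥ x) := by
  set V := hS.eigenvectorUnitary.1 with hV
  have hU : V * star V = 1 := hS.eigenvectorUnitary.2.2
  have hU' : star V * V = 1 := hS.eigenvectorUnitary.2.1
  have hVTorth : (star V)ᵀ * star V = 1 := by
    rw [star_eq_transpose, Matrix.transpose_transpose]; exact hU
  set z := star V *ᵥ x with hz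
  have h1 : x ⬝ᵥ (S *ᵥ x) = z ⬝ᵥ (Matrix.diagonal hS.eigenvalues *ᵥ z) := by
    conv_lhs => rw [spectral hS]
    rw [← Matrix.mulVec_mulVec, ← Matrix.mulVec_mulVec, Matrix.dotProduct_mulVec x V,
      ← Matrix.mulVec_transpose, ← star_eq_transpose]
  have h2 : z ⬝ᵥ (Matrix.diagonal hS.eigenvalues *ᵥ z) = ∑ i, hS.eigenvalues i * z i ^ 2 := by
    simp [dotProduct, Matrix.mulVec_diagonal, sq]
    congr 1; funext i; ring
  have h3 : eucNorm x ^ 2 = ∑ i, z i ^ 2 := by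
    rw [← enorm_mulVec_orth (star V) hVTorth x, ← hz, enorm_sq]
    simp [dotProduct, sq]
  rw [h1, h2, h3, Finset.mul_sum]
  apply Finset.sum_le_sum
  intro i _
  nlinarith [sq_nonneg (z i), hle i]

lemma eig_lower_of_quad {S : Matrix (Fin N) (Fin N) ℝ} (hS : S.IsHermitian)
    {lam : ℝ} (h : ∀ x, lam * eucNorm x ^ 2 ≤ x ⬝ᵥ (S *ᵥ x)) :
    ∀ i, lam ≤ hS.eigenvalues i := by
  intro i
  set v : Fin N → ℝ := (WithLp.equiv 2 _) (hS.eigenvectorBasis i) with hv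
  have hmv : S *ᵥ v = hS.eigenvalues i • v := hS.mulVec_eigenvectorBasis i
  have hnorm : eucNorm v = 1 := by
    rw [enorm_eq]
    have : toE v = hS.eigenvectorBasis i := rfl
    rw [this]
    exact hS.eigenvectorBasis.orthonormal.1 i
  have := h v
  rw [hmv, hnorm] at this
  simp only [one_pow, mul_one] at this
  have hd : v ⬝ᵥ (hS.eigenvalues i • v) = hS.eigenvalues i * (eucNorm v ^ 2) := by
    rw [enorm_sq]
    simp [dotProduct, Finset.mul_sum]
    congr 1; funext j; ring
  rw [hd, hnorm] at this
  simpa using this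

end Aux3

namespace Aux4
open Aux Aux2 Aux3
attribute [local instance] Matrix.linftyOpNormedRing Matrix.linftyOpNormedAlgebra
open scoped Kronecker

variable {a b : ℕ}

/-- `A ↦ A ⊗ₖ 1` as a ring hom. -/
def kronL (a b : ℕ) : Matrix (Fin a) (Fin a) ℝ →+* Matrix (Fin a × Fin b) (Fin a × Fin b) ℝ where
  toFun A := A ⊗ₖ (1 : Matrix (Fin b) (Fin b) ℝ)
  map_one' := Matrix.one_kronecker_one
  map_mul' A B := by rw [← Matrix.mul_kronecker_mul, Matrix.one_mul]
  map_zero' := Matrix.zero_kronecker _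
  map_add' A B := Matrix.add_kronecker A B _

/-- `B ↦ 1 ⊗ₖ B` as a ring hom. -/
def kronR (a b : ℕ) : Matrix (Fin b) (Fin b) ℝ →+* Matrix (Fin a × Fin b) (Fin a × Fin b) ℝ where
  toFun B := (1 : Matrix (Fin a) (Fin a) ℝ) ⊗ₖ B
  map_one' := Matrix.one_kronecker_one
  map_mul' A B := by rw [← Matrix.mul_kronecker_mul, Matrix.one_mul]
  map_zero' := Matrix.kronecker_zero _
  map_add' A B := Matrix.kronecker_add _ A B

lemma continuous_kronL : Continuous (kronL a b) := by
  apply continuous_matrix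
  intro i j
  simp only [kronL, RingHom.coe_mk, MonoidHom.coe_mk, OneHom.coe_mk, Matrix.kroneckerMap_apply]
  exact ((continuous_id.matrix_elem i.1 j.1).mul continuous_const)

lemma continuous_kronR : Continuous (kronR a b) := by
  apply continuous_matrix
  intro i j
  simp only [kronR, RingHom.coe_mk, MonoidHom.coe_mk, OneHom.coe_mk, Matrix.kroneckerMap_apply]
  exact (continuous_const.mul (((continuous_apply j.2).comp (continuous_apply i.2))))

lemma exp_kronecker_sum (A : Matrix (Fin a) (Fin a) ℝ) (B : Matrix (Fin b) (Fin b) ℝ) :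
    NormedSpace.exp (A ⊗ₖ (1 : Matrix (Fin b) (Fin b) ℝ) + (1 : Matrix (Fin a) (Fin a) ℝ) ⊗ₖ B)
      = NormedSpace.exp A ⊗ₖ NormedSpace.exp B := by
  have hc : Commute (A ⊗ₖ (1 : Matrix (Fin b) (Fin b) ℝ)) ((1 : Matrix (Fin a) (Fin a) ℝ) ⊗ₖ B) := by
    unfold Commute SemiconjBy
    rw [← Matrix.mul_kronecker_mul, ← Matrix.mul_kronecker_mul, one_mul, mul_one, one_mul, mul_one]
  rw [Matrix.exp_add_of_commute _ _ hc]
  have h1 : NormedSpace.exp (A ⊗ₖ (1 : Matrix (Fin b) (Fin b) ℝ))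
      = NormedSpace.exp A ⊗ₖ (1 : Matrix (Fin b) (Fin b) ℝ) :=
    (@NormedSpace.map_exp _ _ _ _ (FiniteDimensional.complete ℝ _) _ _ _ _ _ (kronL a b) continuous_kronL A).symm
  have h2 : NormedSpace.exp ((1 : Matrix (Fin a) (Fin a) ℝ) ⊗ₖ B)
      = (1 : Matrix (Fin a) (Fin a) ℝ) ⊗ₖ NormedSpace.exp B :=
    (@NormedSpace.map_exp _ _ _ _ (FiniteDimensional.complete ℝ _) _ _ _ _ _ (kronR a b) continuous_kronR B).symm
  rw [h1, h2, ← Matrix.mul_kronecker_mul, one_mul, mul_one]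

end Aux4

namespace Aux5
open Aux Aux2 Aux3 Aux4
open scoped Kronecker

lemma kron_mulVec {p q r s : ℕ} (A : Matrix (Fin p) (Fin q) ℝ) (B : Matrix (Fin r) (Fin s) ℝ)
    (X : Matrix (Fin s) (Fin q) ℝ) :
    (A ⊗ₖ B) *ᵥ vecCols X = vecCols (B * X * Aᵀ) := by
  funext pk
  obtain ⟨i, k⟩ := pk
  have lhs : ((A ⊗ₖ B) *ᵥ vecCols X) (i, k) = ∑ j : Fin q, ∑ l : Fin s, A i j * B k l * X l j := by
    simp only [Matrix.mulVec, dotProduct, Matrix.kroneckerMap_apply, vecCols]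
    exact Fintype.sum_prod_type _
  have rhs : vecCols (B * X * Aᵀ) (i, k) = ∑ j : Fin q, ∑ l : Fin s, B k l * X l j * A i j := by
    simp only [vecCols, Matrix.mul_apply, Matrix.transpose_apply, Finset.sum_mul]
  rw [lhs, rhs]
  refine Finset.sum_congr rfl fun j _ => Finset.sum_congr rfl fun l _ => ?_
  ring

lemma mul_vecMulVec_mul {p q r s : ℕ} (e : Matrix (Fin r) (Fin s) ℝ) (f : Matrix (Fin p) (Fin q) ℝ)
    (u : Fin s → ℝ) (w : Fin q → ℝ) :
    e * Matrix.vecMulVec u w * fᵀ = Matrix.vecMulVec (e *ᵥ u) (f *ᵥ w) := by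
  funext i j
  have lhs : (e * Matrix.vecMulVec u w * fᵀ) i j
      = ∑ x : Fin q, (∑ y : Fin s, e i y * (u y * w x)) * f j x := by
    simp only [Matrix.mul_apply, Matrix.vecMulVec_apply, Matrix.transpose_apply]
  have rhs : Matrix.vecMulVec (e *ᵥ u) (f *ᵥ w) i j
      = (∑ y : Fin s, e i y * u y) * ∑ x : Fin q, f j x * w x := by
    simp only [Matrix.vecMulVec_apply, Matrix.mulVec, dotProduct]
  rw [lhs, rhs]
  calc ∑ x : Fin q, (∑ y : Fin s, e i y * (u y * w x)) * f j x
      = ∑ x : Fin q, (∑ y : Fin s, e i y * u y) * (f j x * w x) := by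
        refine Finset.sum_congr rfl fun x _ => ?_
        rw [Finset.sum_mul, Finset.sum_mul]
        refine Finset.sum_congr rfl fun y _ => ?_
        ring
    _ = (∑ y : Fin s, e i y * u y) * ∑ x : Fin q, f j x * w x := (Finset.mul_sum _ _ _).symm

lemma vec_sub {p q : ℕ} (X Y : Matrix (Fin p) (Fin q) ℝ) : vecCols X - vecCols Y = vecCols (X - Y) := rfl

lemma enorm_vec_vecMulVec {p q : ℕ} (u : Fin p → ℝ) (w : Fin q → ℝ) :
    eucNorm (vecCols (Matrix.vecMulVec u w)) = eucNorm u * eucNorm w := by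
  unfold eucNorm vecCols
  rw [← Real.sqrt_mul (by positivity)]
  congr 1
  calc ∑ x : Fin q × Fin p, Matrix.vecMulVec u w x.2 x.1 ^ 2
      = ∑ j : Fin q, ∑ i : Fin p, Matrix.vecMulVec u w (j, i).2 (j, i).1 ^ 2 :=
        Fintype.sum_prod_type _
    _ = ∑ j : Fin q, (∑ i : Fin p, u i ^ 2) * w j ^ 2 := by
        refine Finset.sum_congr rfl fun j _ => ?_
        rw [Finset.sum_mul]
        refine Finset.sum_congr rfl fun i _ => ?_
        simp only [Matrix.vecMulVec_apply]
        ring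
    _ = (∑ i : Fin p, u i ^ 2) * ∑ j : Fin q, w j ^ 2 := (Finset.mul_sum _ _ _).symm

lemma enorm_abs_apply_le {ι : Type*} [Fintype ι] (x : ι → ℝ) (i : ι) : |x i| ≤ eucNorm x := by
  unfold eucNorm
  rw [← Real.sqrt_sq_eq_abs]
  apply Real.sqrt_le_sqrt
  exact Finset.single_le_sum (fun j _ => sq_nonneg (x j)) (Finset.mem_univ i)

lemma enorm_single {N : ℕ} (j : Fin N) : eucNorm (Pi.single j 1 : Fin N → ℝ) = 1 := by
  unfold eucNorm
  rw [show (∑ i, (Pi.single j 1 : Fin N → ℝ) i ^ 2) = 1 by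
    rw [Finset.sum_eq_single j] <;> simp +contextual [Pi.single_apply]]
  exact Real.sqrt_one

lemma entry_abs_le {N : ℕ} (X : Matrix (Fin N) (Fin N) ℝ) {K : ℝ}
    (h : ∀ x, eucNorm (X *ᵥ x) ≤ K * eucNorm x) (i j : Fin N) : |X i j| ≤ K := by
  have h1 : X *ᵥ (Pi.single j 1) = fun i => X i j := by
    funext i
    rw [Matrix.mulVec_single]
    simp
  have := h (Pi.single j 1)
  rw [h1, enorm_single, mul_one] at this
  exact le_trans (enorm_abs_apply_le (fun i => X i j) i) this

end Aux5

namespace Aux6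
open Aux Aux2 Aux3 Aux4 Aux5
open scoped Kronecker
attribute [local instance] Matrix.linftyOpNormedRing Matrix.linftyOpNormedAlgebra

lemma conjT_eq_transpose {a b : ℕ} (P : Matrix (Fin a) (Fin b) ℝ) : Pᴴ = Pᵀ := by
  rw [Matrix.conjTranspose]; simp [Matrix.transpose_map]; funext i j; simp

lemma enorm_add_le {ι : Type*} [Fintype ι] (x y : ι → ℝ) :
    eucNorm (x + y) ≤ eucNorm x + eucNorm y := by
  rw [enorm_eq, enorm_eq, enorm_eq, toE_add]; exact norm_add_le _ _

lemma enorm_sub_le' {ι : Type*} [Fintype ι] (x y : ι → ℝ) :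
    eucNorm (x - y) ≤ eucNorm x + eucNorm y := by
  rw [enorm_eq, enorm_eq, enorm_eq, toE_sub]; exact norm_sub_le _ _

lemma exp_smul_one {N : ℕ} (c : ℝ) :
    NormedSpace.exp (c • (1 : Matrix (Fin N) (Fin N) ℝ)) = Real.exp c • 1 := by
  rw [Matrix.smul_one_eq_diagonal, Matrix.exp_diagonal, Pi.exp_def]
  rw [Matrix.smul_one_eq_diagonal]
  congr 1
  funext i
  rw [Real.exp_eq_exp_ℝ]

lemma exp_shift {N : ℕ} (S : Matrix (Fin N) (Fin N) ℝ) (τ c : ℝ) :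
    NormedSpace.exp ((-τ) • (S + c • (1 : Matrix (Fin N) (Fin N) ℝ)))
      = Real.exp (-(τ * c)) • NormedSpace.exp ((-τ) • S) := by
  have h1 : (-τ) • (S + c • (1 : Matrix (Fin N) (Fin N) ℝ))
      = (-τ) • S + (-(τ * c)) • (1 : Matrix (Fin N) (Fin N) ℝ) := by
    rw [smul_add, smul_smul]
    congr 1
    rw [neg_mul]
  have hc : Commute ((-τ) • S) ((-(τ * c)) • (1 : Matrix (Fin N) (Fin N) ℝ)) := by
    unfold Commute SemiconjBy
    rw [mul_smul_comm (-(τ * c)) ((-τ) • S) (1 : Matrix (Fin N) (Fin N) ℝ),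
      mul_one, Matrix.smul_mul, one_mul]
  rw [h1, Matrix.exp_add_of_commute _ _ hc, exp_smul_one, mul_smul_comm, mul_one]

lemma continuous_exp_neg_smul {ι : Type*} [Fintype ι] [DecidableEq ι] (A : Matrix ι ι ℝ) :
    Continuous fun τ : ℝ => NormedSpace.exp ((-τ) • A) :=
  (@NormedSpace.exp_continuous _ _ _ (FiniteDimensional.complete ℝ _)).comp ((continuous_neg.comp continuous_id).smul continuous_const)

lemma continuous_enorm {ι : Type*} [Fintype ι] : Continuous fun x : ι → ℝ => eucNorm x := by
  unfold eucNorm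
  exact Real.continuous_sqrt.comp
    (continuous_finset_sum _ fun i _ => ((continuous_apply i).pow 2))

lemma norm_le_enorm {ι : Type*} [Fintype ι] (x : ι → ℝ) : ‖x‖ ≤ eucNorm x := by
  rw [show ‖x‖ = ‖x‖ from rfl]
  apply pi_norm_le_iff_of_nonneg (enorm_nonneg x) |>.mpr
  intro i
  rw [Real.norm_eq_abs]
  exact enorm_abs_apply_le x i

end Aux6

namespace Aux7
open Aux MeasureTheory

lemma enorm_integral_le {ι : Type*} [Fintype ι] {μ : Measure ℝ} {f : ℝ → ι → ℝ}
    (hf : Integrable f μ) :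
    eucNorm (∫ x, f x ∂μ) ≤ ∫ x, eucNorm (f x) ∂μ := by
  set L : (ι → ℝ) →L[ℝ] EuclideanSpace ℝ ι :=
    (PiLp.continuousLinearEquiv 2 ℝ (fun _ : ι => ℝ)).symm.toContinuousLinearMap with hL
  have h1 : eucNorm (∫ x, f x ∂μ) = ‖L (∫ x, f x ∂μ)‖ := by rw [enorm_eq]; rfl
  rw [h1, ← L.integral_comp_comm hf]
  calc ‖∫ x, L (f x) ∂μ‖ ≤ ∫ x, ‖L (f x)‖ ∂μ := norm_integral_le_integral_norm _
    _ = ∫ x, eucNorm (f x) ∂μ := by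
        congr 1
        funext x
        rw [enorm_eq]
        rfl

end Aux7

open Aux Aux2 Aux3 Aux4 Aux5 Aux6 Aux7

/-- Proposition 5.2 of the paper. For a Laplace–Stieltjes function
`f(x) = ∫_0^∞ e^{-τ x} dμ(τ)`, a symmetric positive definite `M` with smallest eigenvalue
`λ_min > 0`, a matrix `P` with orthonormal columns, `T = Pᵀ M P`, `b1` of unit norm and
`b = vecCols (b1 b1ᵀ)`, the structured approximation
`x_m^⊗ = (P ⊗ P) f(𝒯_m) (P ⊗ P)ᵀ b` to `f(𝒜) b`, where `𝒜 = M ⊗ I + I ⊗ M` and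
`𝒯_m = T ⊗ I + I ⊗ T`, satisfies
`‖f(𝒜)b − x_m^⊗‖ ≤ 2 ∫_0^∞ ‖e^{-τ(M+λ_min I)} b1 − P e^{-τ(T+λ_min I)} Pᵀ b1‖ dμ(τ)`. -/
theorem laplace_stieltjes_structured_error_bound {n m : ℕ}
    (μ : Measure ℝ)
    (M : Matrix (Fin n) (Fin n) ℝ) (hM : M.IsHermitian) (hMpd : M.PosDef)
    (lam : ℝ) (hlam_pos : 0 < lam)
    (hlam_le : ∀ i, lam ≤ hM.eigenvalues i) (hlam_mem : ∃ i, hM.eigenvalues i = lam)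
    (P : Matrix (Fin n) (Fin m) ℝ) (hP : Pᵀ * P = 1)
    (b1 : Fin n → ℝ) (hb1 : eucNorm b1 = 1)
    (hμint : IntegrableOn (fun τ : ℝ => Real.exp (-2 * lam * τ)) (Set.Ioi 0) μ) :
    eucNorm
        ((∫ τ in Set.Ioi (0 : ℝ),
            NormedSpace.exp
                ((-τ) •
                  (M ⊗ₖ (1 : Matrix (Fin n) (Fin n) ℝ) +
                    (1 : Matrix (Fin n) (Fin n) ℝ) ⊗ₖ M)) *ᵥ
              vecCols (vecMulVec b1 b1) ∂μ) -
          (P ⊗ₖ P) *ᵥ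
            ((∫ τ in Set.Ioi (0 : ℝ),
                NormedSpace.exp
                  ((-τ) •
                    ((Pᵀ * M * P) ⊗ₖ (1 : Matrix (Fin m) (Fin m) ℝ) +
                      (1 : Matrix (Fin m) (Fin m) ℝ) ⊗ₖ (Pᵀ * M * P))) ∂μ) *ᵥ
              ((P ⊗ₖ P)ᵀ *ᵥ vecCols (vecMulVec b1 b1)))) ≤
      2 *
        ∫ τ in Set.Ioi (0 : ℝ),
          eucNorm
            (NormedSpace.exp ((-τ) • (M + lam • (1 : Matrix (Fin n) (Fin n) ℝ))) *ᵥ b1 -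
              P *ᵥ
                (NormedSpace.exp
                    ((-τ) • (Pᵀ * M * P + lam • (1 : Matrix (Fin m) (Fin m) ℝ))) *ᵥ
                  (Pᵀ *ᵥ b1))) ∂μ := by
  classical
  -- Hermitian structure and eigenvalue bounds for T
  have hTh : (Pᵀ * M * P).IsHermitian := by
    have h := Matrix.isHermitian_conjTranspose_mul_mul P hM
    rwa [conjT_eq_transpose] at h
  have hquadM : ∀ x, lam * eucNorm x ^ 2 ≤ x ⬝ᵥ (M *ᵥ x) := quad_lower hM hlam_le
  have hquadT : ∀ x : Fin m → ℝ, lam * eucNorm x ^ 2 ≤ x ⬝ᵥ ((Pᵀ * M * P) *ᵥ x) := by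
    intro x
    have e1 : (Pᵀ * M * P) *ᵥ x = Pᵀ *ᵥ (M *ᵥ (P *ᵥ x)) := by
      rw [← Matrix.mulVec_mulVec, ← Matrix.mulVec_mulVec]
    have e2 : x ⬝ᵥ (Pᵀ *ᵥ (M *ᵥ (P *ᵥ x))) = (P *ᵥ x) ⬝ᵥ (M *ᵥ (P *ᵥ x)) := by
      rw [Matrix.dotProduct_mulVec x Pᵀ, ← Matrix.mulVec_transpose, Matrix.transpose_transpose]
    rw [e1, e2, ← enorm_mulVec_orth P hP x]
    exact hquadM (P *ᵥ x)
  have hTeig : ∀ i, lam ≤ hTh.eigenvalues i := eig_lower_of_quad hTh hquadT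
  -- abbreviations
  set eM : ℝ → Matrix (Fin n) (Fin n) ℝ := fun τ => NormedSpace.exp ((-τ) • M) with heM
  set eT : ℝ → Matrix (Fin m) (Fin m) ℝ :=
    fun τ => NormedSpace.exp ((-τ) • (Pᵀ * M * P)) with heT
  set u : ℝ → Fin n → ℝ := fun τ => eM τ *ᵥ b1 with hu
  set v : ℝ → Fin n → ℝ := fun τ => P *ᵥ (eT τ *ᵥ (Pᵀ *ᵥ b1)) with hv
  set bv : Fin n × Fin n → ℝ := vecCols (vecMulVec b1 b1) with hbv
  set Amat : Matrix (Fin n × Fin n) (Fin n × Fin n) ℝ :=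
    M ⊗ₖ (1 : Matrix (Fin n) (Fin n) ℝ) + (1 : Matrix (Fin n) (Fin n) ℝ) ⊗ₖ M with hAmat
  set Tmat : Matrix (Fin m × Fin m) (Fin m × Fin m) ℝ :=
    (Pᵀ * M * P) ⊗ₖ (1 : Matrix (Fin m) (Fin m) ℝ) +
      (1 : Matrix (Fin m) (Fin m) ℝ) ⊗ₖ (Pᵀ * M * P) with hTmat
  set F1 : ℝ → Fin n × Fin n → ℝ := fun τ => NormedSpace.exp ((-τ) • Amat) *ᵥ bv with hF1
  set G : ℝ → Matrix (Fin m × Fin m) (Fin m × Fin m) ℝ :=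
    fun τ => NormedSpace.exp ((-τ) • Tmat) with hG
  set c0 : Fin m × Fin m → ℝ := (P ⊗ₖ P)ᵀ *ᵥ bv with hc0
  set F2 : ℝ → Fin n × Fin n → ℝ := fun τ => (P ⊗ₖ P) *ᵥ (G τ *ᵥ c0) with hF2
  set D : ℝ → Fin n → ℝ := fun τ =>
    NormedSpace.exp ((-τ) • (M + lam • (1 : Matrix (Fin n) (Fin n) ℝ))) *ᵥ b1 -
      P *ᵥ (NormedSpace.exp
        ((-τ) • (Pᵀ * M * P + lam • (1 : Matrix (Fin m) (Fin m) ℝ))) *ᵥ (Pᵀ *ᵥ b1)) with hD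
  -- pointwise identities
  have hF1_eq : ∀ τ : ℝ, F1 τ = vecCols (Matrix.vecMulVec (u τ) (u τ)) := by
    intro τ
    have hsplit : (-τ) • Amat = ((-τ) • M) ⊗ₖ (1 : Matrix (Fin n) (Fin n) ℝ) +
        (1 : Matrix (Fin n) (Fin n) ℝ) ⊗ₖ ((-τ) • M) := by
      rw [hAmat, smul_add, Matrix.smul_kronecker, Matrix.kronecker_smul]
    rw [hF1]
    show NormedSpace.exp ((-τ) • Amat) *ᵥ bv = _
    rw [hsplit, exp_kronecker_sum, hbv, kron_mulVec, mul_vecMulVec_mul]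
  have hGkron : ∀ τ : ℝ, G τ = eT τ ⊗ₖ eT τ := by
    intro τ
    have hsplit : (-τ) • Tmat = ((-τ) • (Pᵀ * M * P)) ⊗ₖ (1 : Matrix (Fin m) (Fin m) ℝ) +
        (1 : Matrix (Fin m) (Fin m) ℝ) ⊗ₖ ((-τ) • (Pᵀ * M * P)) := by
      rw [hTmat, smul_add, Matrix.smul_kronecker, Matrix.kronecker_smul]
    rw [hG]
    show NormedSpace.exp ((-τ) • Tmat) = _
    rw [hsplit, exp_kronecker_sum]
  have hc0_eq : c0 = vecCols (Matrix.vecMulVec (Pᵀ *ᵥ b1) (Pᵀ *ᵥ b1)) := by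
    rw [hc0, hbv, ← Matrix.kroneckerMap_transpose, kron_mulVec, mul_vecMulVec_mul]
  have hF2_eq : ∀ τ : ℝ, F2 τ = vecCols (Matrix.vecMulVec (v τ) (v τ)) := by
    intro τ
    rw [hF2]
    show (P ⊗ₖ P) *ᵥ (G τ *ᵥ c0) = _
    rw [hGkron τ, hc0_eq, kron_mulVec, mul_vecMulVec_mul, kron_mulVec, mul_vecMulVec_mul, hv]
  -- pointwise bounds
  have hu_bound : ∀ τ : ℝ, 0 ≤ τ → eucNorm (u τ) ≤ Real.exp (-(lam * τ)) := by
    intro τ hτ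
    have h := enorm_exp_mulVec_le hM hlam_le hτ b1
    rwa [hb1, mul_one] at h
  have hPtb1 : eucNorm (Pᵀ *ᵥ b1) ≤ 1 := le_trans (enorm_transpose_mulVec_le P hP b1) (le_of_eq hb1)
  have hv_bound : ∀ τ : ℝ, 0 ≤ τ → eucNorm (v τ) ≤ Real.exp (-(lam * τ)) := by
    intro τ hτ
    have h1 : eucNorm (v τ) = eucNorm (eT τ *ᵥ (Pᵀ *ᵥ b1)) := enorm_mulVec_orth P hP _
    have h2 := enorm_exp_mulVec_le hTh hTeig hτ (Pᵀ *ᵥ b1)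
    rw [h1]
    calc eucNorm (eT τ *ᵥ (Pᵀ *ᵥ b1)) ≤ Real.exp (-(lam * τ)) * eucNorm (Pᵀ *ᵥ b1) := h2
      _ ≤ Real.exp (-(lam * τ)) * 1 :=
        mul_le_mul_of_nonneg_left hPtb1 (Real.exp_nonneg _)
      _ = Real.exp (-(lam * τ)) := mul_one _
  have hD_eq : ∀ τ : ℝ, D τ = Real.exp (-(τ * lam)) • (u τ - v τ) := by
    intro τ
    rw [hD]
    show NormedSpace.exp ((-τ) • (M + lam • (1 : Matrix (Fin n) (Fin n) ℝ))) *ᵥ b1 -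
      P *ᵥ (NormedSpace.exp
        ((-τ) • (Pᵀ * M * P + lam • (1 : Matrix (Fin m) (Fin m) ℝ))) *ᵥ (Pᵀ *ᵥ b1)) = _
    rw [exp_shift M τ lam, exp_shift (Pᵀ * M * P) τ lam, Matrix.smul_mulVec,
      Matrix.smul_mulVec, Matrix.mulVec_smul, smul_sub]
  have hD_norm : ∀ τ : ℝ, eucNorm (D τ) = Real.exp (-(τ * lam)) * eucNorm (u τ - v τ) := by
    intro τ
    rw [hD_eq τ, Aux.enorm_smul, abs_of_nonneg (Real.exp_nonneg _)]
  -- key pointwise inequality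
  have key : ∀ τ : ℝ, 0 ≤ τ → eucNorm (F1 τ - F2 τ) ≤ 2 * eucNorm (D τ) := by
    intro τ hτ
    rw [hF1_eq τ, hF2_eq τ, Aux5.vec_sub]
    have hsplit : Matrix.vecMulVec (u τ) (u τ) - Matrix.vecMulVec (v τ) (v τ)
        = Matrix.vecMulVec (u τ) (u τ - v τ) + Matrix.vecMulVec (u τ - v τ) (v τ) := by
      funext i j
      simp only [Matrix.sub_apply, Matrix.add_apply, Matrix.vecMulVec_apply, Pi.sub_apply]
      ring
    rw [hsplit]
    have hva : vecCols (Matrix.vecMulVec (u τ) (u τ - v τ) + Matrix.vecMulVec (u τ - v τ) (v τ))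
        = vecCols (Matrix.vecMulVec (u τ) (u τ - v τ)) + vecCols (Matrix.vecMulVec (u τ - v τ) (v τ)) :=
      rfl
    rw [hva]
    have h1 := Aux6.enorm_add_le (vecCols (Matrix.vecMulVec (u τ) (u τ - v τ)))
      (vecCols (Matrix.vecMulVec (u τ - v τ) (v τ)))
    rw [enorm_vec_vecMulVec, enorm_vec_vecMulVec] at h1
    have h2 := hu_bound τ hτ
    have h3 := hv_bound τ hτ
    have h4 := hD_norm τ
    have h5 : Real.exp (-(τ * lam)) = Real.exp (-(lam * τ)) := by rw [mul_comm]
    rw [h5] at h4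
    have h6 := enorm_nonneg (u τ - v τ)
    nlinarith [enorm_nonneg (u τ), enorm_nonneg (v τ)]
  -- integrability and final assembly
  have hexp2 : ∀ τ : ℝ, Real.exp (-(lam * τ)) * Real.exp (-(lam * τ)) = Real.exp (-2 * lam * τ) := by
    intro τ; rw [← Real.exp_add]; ring_nf
  have hcontF1 : Continuous F1 := by
    rw [hF1]
    exact (continuous_exp_neg_smul Amat).matrix_mulVec continuous_const
  have hcontG : Continuous G := by
    rw [hG]
    exact continuous_exp_neg_smul Tmat
  have hcontF2 : Continuous F2 := by
    rw [hF2]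
    exact continuous_const.matrix_mulVec (hcontG.matrix_mulVec continuous_const)
  have hcontD : Continuous D := by
    rw [hD]
    exact ((continuous_exp_neg_smul _).matrix_mulVec continuous_const).sub
      (continuous_const.matrix_mulVec ((continuous_exp_neg_smul _).matrix_mulVec continuous_const))
  have hintF1 : Integrable F1 (μ.restrict (Set.Ioi 0)) := by
    refine Integrable.mono' hμint hcontF1.aestronglyMeasurable ?_
    refine (ae_restrict_iff' measurableSet_Ioi).mpr (ae_of_all _ fun τ hτ => ?_)
    have hτ0 : (0 : ℝ) ≤ τ := le_of_lt hτ
    calc ‖F1 τ‖ ≤ eucNorm (F1 τ) := norm_le_enorm _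
      _ = eucNorm (u τ) * eucNorm (u τ) := by rw [hF1_eq τ, enorm_vec_vecMulVec]
      _ ≤ Real.exp (-(lam * τ)) * Real.exp (-(lam * τ)) :=
          mul_le_mul (hu_bound τ hτ0) (hu_bound τ hτ0) (enorm_nonneg _) (Real.exp_nonneg _)
      _ = Real.exp (-2 * lam * τ) := hexp2 τ
  have hintF2 : Integrable F2 (μ.restrict (Set.Ioi 0)) := by
    refine Integrable.mono' hμint hcontF2.aestronglyMeasurable ?_
    refine (ae_restrict_iff' measurableSet_Ioi).mpr (ae_of_all _ fun τ hτ => ?_)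
    have hτ0 : (0 : ℝ) ≤ τ := le_of_lt hτ
    calc ‖F2 τ‖ ≤ eucNorm (F2 τ) := norm_le_enorm _
      _ = eucNorm (v τ) * eucNorm (v τ) := by rw [hF2_eq τ, enorm_vec_vecMulVec]
      _ ≤ Real.exp (-(lam * τ)) * Real.exp (-(lam * τ)) :=
          mul_le_mul (hv_bound τ hτ0) (hv_bound τ hτ0) (enorm_nonneg _) (Real.exp_nonneg _)
      _ = Real.exp (-2 * lam * τ) := hexp2 τ
  haveI : TopologicalSpace.PseudoMetrizableSpace (Matrix (Fin m × Fin m) (Fin m × Fin m) ℝ) :=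
    inferInstanceAs (TopologicalSpace.PseudoMetrizableSpace (Fin m × Fin m → Fin m × Fin m → ℝ))
  letI : TopologicalSpace (Matrix (Fin m × Fin m) (Fin m × Fin m) ℝ) :=
    (Matrix.normedAddCommGroup :
      NormedAddCommGroup (Matrix (Fin m × Fin m) (Fin m × Fin m) ℝ)).toUniformSpace.toTopologicalSpace
  have hintG : Integrable G (μ.restrict (Set.Ioi 0)) := by
    refine Integrable.mono' hμint hcontG.aestronglyMeasurable ?_
    refine (ae_restrict_iff' measurableSet_Ioi).mpr (ae_of_all _ fun τ hτ => ?_)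
    have hτ0 : (0 : ℝ) ≤ τ := le_of_lt hτ
    have hentry : ∀ i j, |eT τ i j| ≤ Real.exp (-(lam * τ)) :=
      entry_abs_le (eT τ) (fun x => enorm_exp_mulVec_le hTh hTeig hτ0 x)
    rw [hGkron τ]
    refine (Matrix.norm_le_iff (Real.exp_nonneg _)).mpr ?_
    rintro ⟨i1, i2⟩ ⟨j1, j2⟩
    rw [Matrix.kroneckerMap_apply, Real.norm_eq_abs, abs_mul, ← hexp2 τ]
    exact mul_le_mul (hentry i1 j1) (hentry i2 j2) (abs_nonneg _) (Real.exp_nonneg _)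
  have hintenD : Integrable (fun τ => eucNorm (D τ)) (μ.restrict (Set.Ioi 0)) := by
    refine Integrable.mono' (hμint.const_mul 2)
      (Aux6.continuous_enorm.comp hcontD).aestronglyMeasurable ?_
    refine (ae_restrict_iff' measurableSet_Ioi).mpr (ae_of_all _ fun τ hτ => ?_)
    have hτ0 : (0 : ℝ) ≤ τ := le_of_lt hτ
    rw [Real.norm_eq_abs, abs_of_nonneg (enorm_nonneg _), hD_norm τ]
    have h1 : eucNorm (u τ - v τ) ≤ Real.exp (-(lam * τ)) + Real.exp (-(lam * τ)) :=
      le_trans (enorm_sub_le' _ _) (add_le_add (hu_bound τ hτ0) (hv_bound τ hτ0))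
    have h2 : Real.exp (-(τ * lam)) * (Real.exp (-(lam * τ)) + Real.exp (-(lam * τ)))
        = 2 * Real.exp (-2 * lam * τ) := by
      rw [mul_comm τ lam, ← hexp2 τ]; ring
    calc Real.exp (-(τ * lam)) * eucNorm (u τ - v τ)
        ≤ Real.exp (-(τ * lam)) * (Real.exp (-(lam * τ)) + Real.exp (-(lam * τ))) :=
          mul_le_mul_of_nonneg_left h1 (Real.exp_nonneg _)
      _ = 2 * Real.exp (-2 * lam * τ) := h2
  -- continuous linear maps to commute with the integrals
  let Lc0 : Matrix (Fin m × Fin m) (Fin m × Fin m) ℝ →L[ℝ] (Fin m × Fin m → ℝ) :=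
    LinearMap.toContinuousLinearMap
      { toFun := fun X => X *ᵥ c0
        map_add' := fun X Y => Matrix.add_mulVec X Y c0
        map_smul' := fun c X => Matrix.smul_mulVec c X c0 }
  let LP : (Fin m × Fin m → ℝ) →L[ℝ] (Fin n × Fin n → ℝ) :=
    LinearMap.toContinuousLinearMap (Matrix.mulVecLin (P ⊗ₖ P))
  have hintGc0 : Integrable (fun τ => G τ *ᵥ c0) (μ.restrict (Set.Ioi 0)) :=
    Lc0.integrable_comp hintG
  have e1 : (∫ τ in Set.Ioi (0 : ℝ), G τ ∂μ) *ᵥ c0 = ∫ τ in Set.Ioi (0 : ℝ), G τ *ᵥ c0 ∂μ :=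
    (Lc0.integral_comp_comm hintG).symm
  have e2 : (P ⊗ₖ P) *ᵥ (∫ τ in Set.Ioi (0 : ℝ), G τ *ᵥ c0 ∂μ)
      = ∫ τ in Set.Ioi (0 : ℝ), F2 τ ∂μ :=
    (LP.integral_comp_comm hintGc0).symm
  have hintF12 : Integrable (fun τ => F1 τ - F2 τ) (μ.restrict (Set.Ioi 0)) := hintF1.sub hintF2
  calc eucNorm ((∫ τ in Set.Ioi (0 : ℝ), F1 τ ∂μ) -
        (P ⊗ₖ P) *ᵥ ((∫ τ in Set.Ioi (0 : ℝ), G τ ∂μ) *ᵥ c0))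
      = eucNorm (∫ τ in Set.Ioi (0 : ℝ), (F1 τ - F2 τ) ∂μ) := by
        rw [e1, e2, ← integral_sub hintF1 hintF2]
    _ ≤ ∫ τ in Set.Ioi (0 : ℝ), eucNorm (F1 τ - F2 τ) ∂μ := enorm_integral_le hintF12
    _ ≤ ∫ τ in Set.Ioi (0 : ℝ), 2 * eucNorm (D τ) ∂μ := by
        refine integral_mono_of_nonneg (ae_of_all _ fun τ => enorm_nonneg _)
          (hintenD.const_mul 2) ?_
        exact (ae_restrict_iff' measurableSet_Ioi).mpr
          (ae_of_all _ fun τ hτ => key τ (le_of_lt hτ))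
    _ = 2 * ∫ τ in Set.Ioi (0 : ℝ), eucNorm (D τ) ∂μ := integral_const_mul 2 _
end

section
/- Let λ > 0, ρ > 0, γ ≥ 1/2 be real numbers and m a positive integer with m > γ. Let e : ℝ → ℝ be a measurable function with e(τ) ≥ 0 for τ > 0, and suppose: (a) e(τ) ≤ 10 (ρτ)^{-1} e^{−ρτ} (eρτ/m)^m for all 0 < τ ≤ m/(2ρ), and (b) e(τ) ≤ 10 e^{−m²/(5ρτ)} for all m/(2ρ) ≤ τ ≤ m²/(4ρ). Then ∫_0^{m²/(4ρ)} τ^{−γ} e^{−2λτ} e(τ) dτ ≤ 10 [ (1/ρ)(eρ/m)^m (2λ+ρ)^{γ−m} 𝛄(m−γ, (2λ+ρ)m/(2ρ)) + (2ρ/m)^{γ−1/2} √(π/(2λ)) e^{−2m√(2λ/(5ρ))} ], where 𝛄(s,x) = ∫_0^x t^{s−1} e^{−t} dt is the lower incomplete Gamma function. -/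
open MeasureTheory Real Set


lemma image_inv_mul (k : ℝ) (hk : 0 < k) : (fun x : ℝ => k / x) '' Ioi 0 = Ioi 0 := by
  ext y
  constructor
  · rintro ⟨x, hx, rfl⟩; exact div_pos hk hx
  · intro hy; exact ⟨k / y, div_pos hk hy, by field_simp⟩

lemma invol_integral (k : ℝ) (hk : 0 < k) (φ : ℝ → ℝ) :
    ∫ x in Ioi (0:ℝ), φ x = ∫ x in Ioi (0:ℝ), (k / x ^ 2) * φ (k / x) := by
  conv_lhs => rw [← image_inv_mul k hk]
  rw [integral_image_eq_integral_abs_deriv_smul measurableSet_Ioi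
      (f' := fun x => -(k / x ^ 2)) ?_ ?_]
  · apply setIntegral_congr_fun measurableSet_Ioi
    intro x hx
    have hx0 : (0:ℝ) < x := hx
    have : |(-(k / x ^ 2))| = k / x ^ 2 := by
      rw [abs_neg, abs_of_pos (by positivity)]
    simp [this, smul_eq_mul]
  · intro x hx
    have hx0 : x ≠ 0 := ne_of_gt hx
    have : HasDerivAt (fun x : ℝ => k / x) (-(k / x ^ 2)) x := by
      simpa [div_eq_mul_inv, mul_comm] using (hasDerivAt_inv hx0).const_mul k
    exact this.hasDerivWithinAt
  · intro x hx y hy hxy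
    have hx0 : (0:ℝ) < x := hx
    have hy0 : (0:ℝ) < y := hy
    field_simp at hxy
    rcases hxy with h | h
    · rfl

lemma gauss_bound (b₁ b₂ : ℝ) (h1 : 0 < b₁) (h2 : 0 < b₂) :
    ∫ τ in Ioi (0:ℝ), (Real.sqrt τ)⁻¹ * Real.exp (-(b₁ * τ) - b₂ / τ) ≤
      Real.sqrt (π / b₁) * Real.exp (-(2 * Real.sqrt (b₁ * b₂))) := by
  set h : ℝ → ℝ := fun τ => (Real.sqrt τ)⁻¹ * Real.exp (-(b₁ * τ) - b₂ / τ) with hh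
  set j : ℝ → ℝ := fun τ => (τ * Real.sqrt τ)⁻¹ * Real.exp (-(b₁ * τ) - b₂ / τ) with hj
  set k : ℝ := b₂ / b₁ with hk
  have hkpos : 0 < k := div_pos h2 h1
  set g : ℝ → ℝ := fun x => Real.sqrt b₁ * Real.sqrt x - Real.sqrt b₂ / Real.sqrt x with hg
  set g' : ℝ → ℝ := fun x =>
    Real.sqrt b₁ / (2 * Real.sqrt x) + Real.sqrt b₂ / (2 * (x * Real.sqrt x)) with hg'
  have sb1 : 0 < Real.sqrt b₁ := Real.sqrt_pos.mpr h1
  have sb2 : 0 < Real.sqrt b₂ := Real.sqrt_pos.mpr h2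
  -- continuity / measurability of h on Ioi 0
  have hcont : ContinuousOn h (Ioi (0:ℝ)) := by
    apply ContinuousOn.mul
    · exact (Real.continuous_sqrt.continuousOn.inv₀ fun x hx =>
        (Real.sqrt_pos.mpr (mem_Ioi.mp hx)).ne')
    · apply Real.continuous_exp.comp_continuousOn
      apply ContinuousOn.sub (Continuous.continuousOn (by continuity))
      exact continuousOn_const.div continuousOn_id fun x hx => (mem_Ioi.mp hx).ne'
  -- integrability of h
  have hint : IntegrableOn h (Ioi (0:ℝ)) := by
    have hdom : IntegrableOn (fun x : ℝ => x ^ (-(1/2) : ℝ) * Real.exp (-b₁ * x)) (Ioi 0) := by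
      have := integrableOn_rpow_mul_exp_neg_mul_rpow
        (p := 1) (s := -(1/2)) (b := b₁) (by norm_num) one_pos h1
      refine this.congr_fun (fun x hx => ?_) measurableSet_Ioi
      beta_reduce; rw [Real.rpow_one]
    refine Integrable.mono' hdom (hcont.aestronglyMeasurable measurableSet_Ioi) ?_
    filter_upwards [ae_restrict_mem measurableSet_Ioi] with x hx
    have hx0 : (0:ℝ) < x := hx
    have h1' : (Real.sqrt x)⁻¹ = x ^ (-(1/2) : ℝ) := by
      rw [Real.rpow_neg hx0.le, Real.sqrt_eq_rpow]
    rw [Real.norm_eq_abs, abs_of_nonneg (by positivity), hh]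
    simp only [h1']
    have hE : Real.exp (-(b₁ * x) - b₂ / x) ≤ Real.exp (-b₁ * x) := by
      rw [Real.exp_le_exp]
      have : 0 ≤ b₂ / x := by positivity
      linarith
    exact mul_le_mul_of_nonneg_left hE (Real.rpow_nonneg hx0.le _)
  -- involution: ∫ h = √k * ∫ j
  have hIJfun : ∀ x ∈ Ioi (0:ℝ), (k / x ^ 2) * h (k / x) = Real.sqrt k * j x := by
    intro x hx
    have hx0 : (0:ℝ) < x := hx
    have hsx : Real.sqrt x * Real.sqrt x = x := Real.mul_self_sqrt hx0.le
    have hexp : -(b₁ * (k / x)) - b₂ / (k / x) = -(b₁ * x) - b₂ / x := by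
      rw [hk]; field_simp; ring
    simp only [hh, hj]
    rw [hexp]
    have hsk : Real.sqrt (k / x) = Real.sqrt k / Real.sqrt x := Real.sqrt_div hkpos.le x
    rw [hsk]
    have hskpos : 0 < Real.sqrt k := Real.sqrt_pos.mpr hkpos
    have hsxpos : 0 < Real.sqrt x := Real.sqrt_pos.mpr hx0
    have hkk : Real.sqrt k * Real.sqrt k = k := Real.mul_self_sqrt hkpos.le
    have hc : k / x ^ 2 * (Real.sqrt k / Real.sqrt x)⁻¹ = Real.sqrt k * (x * Real.sqrt x)⁻¹ := by
      rw [inv_div, div_mul_div_comm, ← div_eq_mul_inv,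
        div_eq_div_iff (by positivity) (by positivity)]
      linear_combination (k * x) * hsx - x ^ 2 * hkk
    calc k / x ^ 2 * ((Real.sqrt k / Real.sqrt x)⁻¹ * Real.exp (-(b₁ * x) - b₂ / x))
        = (k / x ^ 2 * (Real.sqrt k / Real.sqrt x)⁻¹) * Real.exp (-(b₁ * x) - b₂ / x) := by ring
      _ = (Real.sqrt k * (x * Real.sqrt x)⁻¹) * Real.exp (-(b₁ * x) - b₂ / x) := by rw [hc]
      _ = Real.sqrt k * ((x * Real.sqrt x)⁻¹ * Real.exp (-(b₁ * x) - b₂ / x)) := by ring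
  have hIJ : ∫ x in Ioi (0:ℝ), h x = Real.sqrt k * ∫ x in Ioi (0:ℝ), j x := by
    rw [invol_integral k hkpos h, ← integral_const_mul]
    exact setIntegral_congr_fun measurableSet_Ioi hIJfun
  -- integrability of j
  have hjint : IntegrableOn j (Ioi (0:ℝ)) := by
    have : IntegrableOn (fun x => |(-(k / x ^ 2))| • h (k / x)) (Ioi (0:ℝ)) := by
      rw [← integrableOn_image_iff_integrableOn_abs_deriv_smul measurableSet_Ioi
        (f' := fun x => -(k / x ^ 2)) ?_ ?_, image_inv_mul k hkpos]
      · exact hint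
      · intro x hx
        have hx0 : x ≠ 0 := ne_of_gt hx
        have : HasDerivAt (fun x : ℝ => k / x) (-(k / x ^ 2)) x := by
          simpa [div_eq_mul_inv, mul_comm] using (hasDerivAt_inv hx0).const_mul k
        exact this.hasDerivWithinAt
      · intro x hx y hy hxy
        have hx0 : (0:ℝ) < x := hx
        have hy0 : (0:ℝ) < y := hy
        field_simp at hxy
        rcases hxy with hh' | hh'
        · rfl
    have h2' : IntegrableOn (fun x => Real.sqrt k * j x) (Ioi (0:ℝ)) := by
      refine this.congr_fun (fun x hx => ?_) measurableSet_Ioi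
      have hx0 : (0:ℝ) < x := hx
      have : |(-(k / x ^ 2))| = k / x ^ 2 := by rw [abs_neg, abs_of_pos (by positivity)]
      beta_reduce; rw [this, smul_eq_mul]
      exact hIJfun x hx
    have h3' : IntegrableOn (fun x => (Real.sqrt k)⁻¹ * (Real.sqrt k * j x)) (Ioi (0:ℝ)) :=
      h2'.const_mul (Real.sqrt k)⁻¹
    refine h3'.congr_fun (fun x hx => ?_) measurableSet_Ioi
    beta_reduce; rw [← mul_assoc, inv_mul_cancel₀ (Real.sqrt_pos.mpr hkpos).ne', one_mul]
  -- pointwise identity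
  have hpt : ∀ x ∈ Ioi (0:ℝ),
      Real.sqrt b₁ * h x + Real.sqrt b₂ * j x
        = (2 * Real.exp (-(2 * Real.sqrt (b₁ * b₂)))) * (g' x * Real.exp (-(g x) ^ 2)) := by
    intro x hx
    have hx0 : (0:ℝ) < x := hx
    have hsxpos : 0 < Real.sqrt x := Real.sqrt_pos.mpr hx0
    have hsx : Real.sqrt x * Real.sqrt x = x := Real.mul_self_sqrt hx0.le
    have hb1 : Real.sqrt b₁ * Real.sqrt b₁ = b₁ := Real.mul_self_sqrt h1.le
    have hb2 : Real.sqrt b₂ * Real.sqrt b₂ = b₂ := Real.mul_self_sqrt h2.le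
    have hbb : Real.sqrt b₁ * Real.sqrt b₂ = Real.sqrt (b₁ * b₂) := (Real.sqrt_mul h1.le b₂).symm
    have e0 : (Real.sqrt b₁ * Real.sqrt x) * (Real.sqrt b₁ * Real.sqrt x) = b₁ * x := by
      rw [mul_mul_mul_comm, hb1, hsx]
    have e1 : (Real.sqrt b₂ / Real.sqrt x) * (Real.sqrt b₂ / Real.sqrt x) = b₂ / x := by
      rw [div_mul_div_comm, hb2, hsx]
    have e2 : (Real.sqrt b₁ * Real.sqrt x) * (Real.sqrt b₂ / Real.sqrt x)
        = Real.sqrt b₁ * Real.sqrt b₂ := by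
      field_simp
    have hg2 : g x ^ 2 = b₁ * x + b₂ / x - 2 * (Real.sqrt b₁ * Real.sqrt b₂) := by
      simp only [hg]
      calc (Real.sqrt b₁ * Real.sqrt x - Real.sqrt b₂ / Real.sqrt x) ^ 2
          = (Real.sqrt b₁ * Real.sqrt x) * (Real.sqrt b₁ * Real.sqrt x)
            - 2 * ((Real.sqrt b₁ * Real.sqrt x) * (Real.sqrt b₂ / Real.sqrt x))
            + (Real.sqrt b₂ / Real.sqrt x) * (Real.sqrt b₂ / Real.sqrt x) := by ring
        _ = b₁ * x + b₂ / x - 2 * (Real.sqrt b₁ * Real.sqrt b₂) := by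
            rw [e0, e1, e2]; ring
    have hexp2 : Real.exp (-(b₁ * x) - b₂ / x)
        = Real.exp (-(2 * Real.sqrt (b₁ * b₂))) * Real.exp (-(g x) ^ 2) := by
      rw [← Real.exp_add]
      congr 1
      rw [hg2, ← hbb]
      ring
    have hco : Real.sqrt b₁ * (Real.sqrt x)⁻¹ + Real.sqrt b₂ * (x * Real.sqrt x)⁻¹
        = 2 * g' x := by
      simp only [hg']
      field_simp
    simp only [hh, hj]
    rw [hexp2]
    calc Real.sqrt b₁ * ((Real.sqrt x)⁻¹ *
          (Real.exp (-(2 * Real.sqrt (b₁ * b₂))) * Real.exp (-(g x) ^ 2))) +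
        Real.sqrt b₂ * ((x * Real.sqrt x)⁻¹ *
          (Real.exp (-(2 * Real.sqrt (b₁ * b₂))) * Real.exp (-(g x) ^ 2)))
        = (Real.sqrt b₁ * (Real.sqrt x)⁻¹ + Real.sqrt b₂ * (x * Real.sqrt x)⁻¹) *
            (Real.exp (-(2 * Real.sqrt (b₁ * b₂))) * Real.exp (-(g x) ^ 2)) := by ring
      _ = _ := by rw [hco]; ring
  -- derivative of g
  have hderiv : ∀ x ∈ Ioi (0:ℝ), HasDerivWithinAt g (g' x) (Ioi (0:ℝ)) x := by
    intro x hx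
    have hx0 : (0:ℝ) < x := hx
    have hsxpos : 0 < Real.sqrt x := Real.sqrt_pos.mpr hx0
    have hsq : Real.sqrt x ^ 2 = x := Real.sq_sqrt hx0.le
    have t1 : HasDerivAt (fun y : ℝ => Real.sqrt b₁ * Real.sqrt y)
        (Real.sqrt b₁ * (1 / (2 * Real.sqrt x))) x :=
      (Real.hasDerivAt_sqrt hx0.ne').const_mul _
    have t2 : HasDerivAt (fun y : ℝ => Real.sqrt b₂ * (Real.sqrt y)⁻¹)
        (Real.sqrt b₂ * (-(1 / (2 * Real.sqrt x)) / (Real.sqrt x) ^ 2)) x :=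
      ((Real.hasDerivAt_sqrt hx0.ne').inv hsxpos.ne').const_mul _
    have t3 : HasDerivAt g
        (Real.sqrt b₁ * (1 / (2 * Real.sqrt x)) -
          Real.sqrt b₂ * (-(1 / (2 * Real.sqrt x)) / (Real.sqrt x) ^ 2)) x := by
      have := t1.sub t2
      simp only [hg, div_eq_mul_inv]
      exact this
    have heq : Real.sqrt b₁ * (1 / (2 * Real.sqrt x)) -
        Real.sqrt b₂ * (-(1 / (2 * Real.sqrt x)) / (Real.sqrt x) ^ 2) = g' x := by
      simp only [hg']
      rw [hsq]
      field_simp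
      ring
    exact (heq ▸ t3).hasDerivWithinAt
  -- strict monotonicity and injectivity
  have hinj : InjOn g (Ioi (0:ℝ)) := by
    have hsm : StrictMonoOn g (Ioi (0:ℝ)) := by
      intro x hx y hy hxy
      have hx0 : (0:ℝ) < x := hx
      have hy0 : (0:ℝ) < y := hy
      have hs : Real.sqrt x < Real.sqrt y := Real.sqrt_lt_sqrt hx0.le hxy
      have hsxpos : 0 < Real.sqrt x := Real.sqrt_pos.mpr hx0
      have e1 : Real.sqrt b₁ * Real.sqrt x < Real.sqrt b₁ * Real.sqrt y :=
        mul_lt_mul_of_pos_left hs sb1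
      have e2 : Real.sqrt b₂ / Real.sqrt y ≤ Real.sqrt b₂ / Real.sqrt x := by
        gcongr
      simp only [hg]
      linarith
    exact hsm.injOn
  -- continuity of g
  have hgcont : ContinuousOn g (Ioi (0:ℝ)) := by
    apply ContinuousOn.sub
    · exact continuousOn_const.mul Real.continuous_sqrt.continuousOn
    · exact continuousOn_const.div Real.continuous_sqrt.continuousOn
        fun x hx => (Real.sqrt_pos.mpr (mem_Ioi.mp hx)).ne'
  -- change of variables for the Gaussian
  have himg : ∫ u in g '' Ioi (0:ℝ), Real.exp (-u ^ 2)
      = ∫ x in Ioi (0:ℝ), g' x * Real.exp (-(g x) ^ 2) := by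
    rw [integral_image_eq_integral_abs_deriv_smul measurableSet_Ioi hderiv hinj]
    apply setIntegral_congr_fun measurableSet_Ioi
    intro x hx
    have hx0 : (0:ℝ) < x := hx
    have hsxpos : 0 < Real.sqrt x := Real.sqrt_pos.mpr hx0
    have : |g' x| = g' x := by
      apply abs_of_pos
      simp only [hg']
      positivity
    show |g' x| • Real.exp (-(g x) ^ 2) = g' x * Real.exp (-(g x) ^ 2)
    rw [smul_eq_mul, this]
  have hIG : Integrable (fun u : ℝ => Real.exp (-u ^ 2)) := by
    have := integrable_exp_neg_mul_sq (one_pos (α := ℝ))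
    simpa using this
  have hgauss : ∫ u : ℝ, Real.exp (-u ^ 2) = Real.sqrt π := by
    have := integral_gaussian 1
    simpa using this
  have hLle : ∫ x in Ioi (0:ℝ), g' x * Real.exp (-(g x) ^ 2) ≤ Real.sqrt π := by
    rw [← himg, ← hgauss]
    exact setIntegral_le_integral hIG (ae_of_all _ fun u => (Real.exp_pos _).le)
  -- combine
  set I := ∫ x in Ioi (0:ℝ), h x with hI
  set J := ∫ x in Ioi (0:ℝ), j x with hJ
  have hsum : Real.sqrt b₁ * I + Real.sqrt b₂ * J
      = (2 * Real.exp (-(2 * Real.sqrt (b₁ * b₂)))) *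
          ∫ x in Ioi (0:ℝ), g' x * Real.exp (-(g x) ^ 2) := by
    rw [hI, hJ, ← integral_const_mul, ← integral_const_mul,
      ← integral_add (hint.const_mul _) (hjint.const_mul _), ← integral_const_mul]
    exact setIntegral_congr_fun measurableSet_Ioi hpt
  have hb2J : Real.sqrt b₂ * J = Real.sqrt b₁ * I := by
    have hbk : b₁ * k = b₂ := by rw [hk]; field_simp
    have hsb : Real.sqrt b₁ * Real.sqrt k = Real.sqrt b₂ := by
      rw [← Real.sqrt_mul h1.le, hbk]
    rw [hIJ, ← mul_assoc, hsb]
  have hEpos : 0 < Real.exp (-(2 * Real.sqrt (b₁ * b₂))) := Real.exp_pos _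
  have key : 2 * (Real.sqrt b₁ * I) ≤
      2 * Real.exp (-(2 * Real.sqrt (b₁ * b₂))) * Real.sqrt π := by
    have := hsum
    rw [hb2J] at this
    have h2' : (2 * Real.exp (-(2 * Real.sqrt (b₁ * b₂)))) *
        (∫ x in Ioi (0:ℝ), g' x * Real.exp (-(g x) ^ 2)) ≤
        (2 * Real.exp (-(2 * Real.sqrt (b₁ * b₂)))) * Real.sqrt π :=
      mul_le_mul_of_nonneg_left hLle (by positivity)
    linarith
  have hfin : I ≤ Real.sqrt π / Real.sqrt b₁ * Real.exp (-(2 * Real.sqrt (b₁ * b₂))) := by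
    rw [div_mul_eq_mul_div, le_div_iff₀ sb1]
    nlinarith
  calc I ≤ Real.sqrt π / Real.sqrt b₁ * Real.exp (-(2 * Real.sqrt (b₁ * b₂))) := hfin
    _ = Real.sqrt (π / b₁) * Real.exp (-(2 * Real.sqrt (b₁ * b₂))) := by
        rw [Real.sqrt_div Real.pi_pos.le]

lemma gauss_integrable (b₁ b₂ : ℝ) (h1 : 0 < b₁) (h2 : 0 < b₂) :
    IntegrableOn (fun τ : ℝ => (Real.sqrt τ)⁻¹ * Real.exp (-(b₁ * τ) - b₂ / τ)) (Ioi 0) := by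
  have hcont : ContinuousOn
      (fun τ : ℝ => (Real.sqrt τ)⁻¹ * Real.exp (-(b₁ * τ) - b₂ / τ)) (Ioi (0:ℝ)) := by
    apply ContinuousOn.mul
    · exact (Real.continuous_sqrt.continuousOn.inv₀ fun x hx =>
        (Real.sqrt_pos.mpr (mem_Ioi.mp hx)).ne')
    · apply Real.continuous_exp.comp_continuousOn
      apply ContinuousOn.sub (Continuous.continuousOn (by continuity))
      exact continuousOn_const.div continuousOn_id fun x hx => (mem_Ioi.mp hx).ne'
  have hdom : IntegrableOn (fun x : ℝ => x ^ (-(1/2) : ℝ) * Real.exp (-b₁ * x)) (Ioi 0) := by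
    have := integrableOn_rpow_mul_exp_neg_mul_rpow
      (p := 1) (s := -(1/2)) (b := b₁) (by norm_num) one_pos h1
    refine this.congr_fun (fun x hx => ?_) measurableSet_Ioi
    beta_reduce; rw [Real.rpow_one]
  refine Integrable.mono' hdom (hcont.aestronglyMeasurable measurableSet_Ioi) ?_
  filter_upwards [ae_restrict_mem measurableSet_Ioi] with x hx
  have hx0 : (0:ℝ) < x := hx
  have h1' : (Real.sqrt x)⁻¹ = x ^ (-(1/2) : ℝ) := by
    rw [Real.rpow_neg hx0.le, Real.sqrt_eq_rpow]
  rw [Real.norm_eq_abs, abs_of_nonneg (by positivity)]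
  simp only [h1']
  have hE : Real.exp (-(b₁ * x) - b₂ / x) ≤ Real.exp (-b₁ * x) := by
    rw [Real.exp_le_exp]
    have : 0 ≤ b₂ / x := by positivity
    linarith
  exact mul_le_mul_of_nonneg_left hE (Real.rpow_nonneg hx0.le _)


/-- The lower incomplete Gamma function `𝛄(s, x) = ∫_0^x t^{s-1} e^{-t} dt`. -/
noncomputable def lowerIncompleteGamma (s x : ℝ) : ℝ :=
  ∫ t in Set.Ioc (0 : ℝ) x, t ^ (s - 1) * Real.exp (-t)


lemma gamma_scale (s kk c : ℝ) (hkk : 0 < kk) (hc : 0 ≤ c) :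
    ∫ τ in Ioc (0:ℝ) c, τ ^ (s - 1) * Real.exp (-(kk * τ))
      = kk ^ (-s) * lowerIncompleteGamma s (kk * c) := by
  have step1 : ∫ τ in Ioc (0:ℝ) c, τ ^ (s - 1) * Real.exp (-(kk * τ))
      = kk ^ (1 - s) * ∫ τ in Ioc (0:ℝ) c, (kk * τ) ^ (s - 1) * Real.exp (-(kk * τ)) := by
    rw [← integral_const_mul]
    apply setIntegral_congr_fun measurableSet_Ioc
    intro τ hτ
    have hτ0 : (0:ℝ) < τ := hτ.1
    show τ ^ (s - 1) * Real.exp (-(kk * τ))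
        = kk ^ (1 - s) * ((kk * τ) ^ (s - 1) * Real.exp (-(kk * τ)))
    rw [Real.mul_rpow hkk.le hτ0.le, ← mul_assoc, ← mul_assoc, ← Real.rpow_add hkk]
    norm_num
  have step2 : ∫ τ in Ioc (0:ℝ) c, (kk * τ) ^ (s - 1) * Real.exp (-(kk * τ))
      = kk⁻¹ * lowerIncompleteGamma s (kk * c) := by
    have h1 : ∫ τ in Ioc (0:ℝ) c, (kk * τ) ^ (s - 1) * Real.exp (-(kk * τ))
        = ∫ τ in (0:ℝ)..c, (kk * τ) ^ (s - 1) * Real.exp (-(kk * τ)) :=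
      (intervalIntegral.integral_of_le hc).symm
    rw [h1, intervalIntegral.integral_comp_mul_left
      (fun t => t ^ (s - 1) * Real.exp (-t)) hkk.ne', mul_zero, smul_eq_mul]
    congr 1
    rw [intervalIntegral.integral_of_le (by positivity), lowerIncompleteGamma]
  rw [step1, step2, ← mul_assoc, ← Real.rpow_neg_one kk, ← Real.rpow_add hkk]
  have : 1 - s + -1 = -s := by ring
  rw [this]

/-- Lemmas 5.3–5.4 of the paper combined. Under the Hochbruck–Lubich
type bounds (a) and (b) on the error function `e`, the weighted integral
`∫_0^{m²/(4ρ)} τ^{−γ} e^{−2λτ} e(τ) dτ` admits the stated explicit bound involving the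
lower incomplete Gamma function. -/
theorem weighted_error_integral_bound
    (lam ρ γ : ℝ) (hlam : 0 < lam) (hρ : 0 < ρ) (hγ : 1 / 2 ≤ γ)
    (m : ℕ) (hm : 0 < m) (hmγ : γ < m)
    (e : ℝ → ℝ) (he_meas : Measurable e) (he_nonneg : ∀ τ : ℝ, 0 < τ → 0 ≤ e τ)
    (ha : ∀ τ : ℝ, 0 < τ → τ ≤ (m : ℝ) / (2 * ρ) →
      e τ ≤ 10 * (ρ * τ)⁻¹ * Real.exp (-(ρ * τ)) * (Real.exp 1 * ρ * τ / m) ^ (m : ℕ))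
    (hb : ∀ τ : ℝ, (m : ℝ) / (2 * ρ) ≤ τ → τ ≤ (m : ℝ) ^ 2 / (4 * ρ) →
      e τ ≤ 10 * Real.exp (-((m : ℝ) ^ 2 / (5 * ρ * τ)))) :
    ∫ τ in Set.Ioc (0 : ℝ) ((m : ℝ) ^ 2 / (4 * ρ)),
        τ ^ (-γ) * Real.exp (-2 * lam * τ) * e τ ≤
      10 *
        (1 / ρ * (Real.exp 1 * ρ / m) ^ (m : ℕ) * (2 * lam + ρ) ^ (γ - (m : ℝ)) *
            lowerIncompleteGamma ((m : ℝ) - γ) ((2 * lam + ρ) * m / (2 * ρ)) +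
          (2 * ρ / m) ^ (γ - 1 / 2) * Real.sqrt (Real.pi / (2 * lam)) *
            Real.exp (-(2 * m * Real.sqrt (2 * lam / (5 * ρ))))) := by
  have hmR : (0:ℝ) < m := by exact_mod_cast hm
  set M : ℝ := (m:ℝ)^2/(4*ρ) with hMdef
  set c : ℝ := (m:ℝ)/(2*ρ) with hcdef
  have hcpos : 0 < c := by positivity
  have hMpos : 0 < M := by positivity
  set c' : ℝ := min c M with hc'def
  have hc'pos : 0 < c' := lt_min hcpos hMpos
  have hc'M : c' ≤ M := min_le_right _ _
  have hc'c : c' ≤ c := min_le_left _ _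
  set F : ℝ → ℝ := fun τ => τ ^ (-γ) * Real.exp (-2*lam*τ) * e τ with hFdef
  have hFmeas : Measurable F := by fun_prop
  have hFnonneg : ∀ τ : ℝ, 0 < τ → 0 ≤ F τ := fun τ hτ =>
    mul_nonneg (mul_nonneg (Real.rpow_nonneg hτ.le _) (Real.exp_pos _).le) (he_nonneg τ hτ)
  -- constants
  set C₁ : ℝ := 10 * ρ⁻¹ * (Real.exp 1 * ρ / m) ^ (m : ℕ) with hC₁def
  have hC₁nonneg : 0 ≤ C₁ := by positivity
  set Gb : ℝ → ℝ := fun τ => τ ^ ((m:ℝ) - γ - 1) * Real.exp (-((2*lam+ρ)*τ)) with hGbdef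
  set b₂ : ℝ := (m:ℝ)^2/(5*ρ) with hb₂def
  have hb₂pos : 0 < b₂ := by positivity
  set D : ℝ := (2*ρ/(m:ℝ)) ^ (γ - 1/2) with hDdef
  have hDnonneg : 0 ≤ D := Real.rpow_nonneg (by positivity) _
  set ψ : ℝ → ℝ := fun τ => (Real.sqrt τ)⁻¹ * Real.exp (-(2*lam*τ) - b₂/τ) with hψdef
  have hψnonneg : ∀ τ : ℝ, 0 ≤ ψ τ := fun τ =>
    mul_nonneg (inv_nonneg.mpr (Real.sqrt_nonneg τ)) (Real.exp_pos _).le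
  -- Part I: integrability and bound on (0, c']
  have hGbint : IntegrableOn Gb (Ioc 0 c) := by
    have h0 := integrableOn_rpow_mul_exp_neg_mul_rpow
      (p := 1) (s := (m:ℝ) - γ - 1) (b := 2*lam+ρ) (by linarith) one_pos (by linarith)
    have h1 : IntegrableOn Gb (Ioi 0) := by
      refine h0.congr_fun (fun x hx => ?_) measurableSet_Ioi
      beta_reduce; rw [Real.rpow_one, neg_mul, hGbdef]
    exact h1.mono_set Ioc_subset_Ioi_self
  have hGint : IntegrableOn (fun τ => C₁ * Gb τ) (Ioc 0 c) := hGbint.const_mul C₁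
  have hGnonneg : ∀ τ ∈ Ioc (0:ℝ) c, 0 ≤ C₁ * Gb τ := by
    intro τ hτ
    have : (0:ℝ) < τ := hτ.1
    have : 0 ≤ Gb τ := mul_nonneg (Real.rpow_nonneg this.le _) (Real.exp_pos _).le
    exact mul_nonneg hC₁nonneg this
  have hFG : ∀ τ ∈ Ioc (0:ℝ) c', F τ ≤ C₁ * Gb τ := by
    intro τ hτ
    have hτ0 : (0:ℝ) < τ := hτ.1
    have hτc : τ ≤ c := hτ.2.trans hc'c
    have hea := ha τ hτ0 hτc
    have step1 : F τ ≤ τ ^ (-γ) * Real.exp (-2*lam*τ) *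
        (10 * (ρ * τ)⁻¹ * Real.exp (-(ρ * τ)) * (Real.exp 1 * ρ * τ / m) ^ (m : ℕ)) := by
      rw [hFdef]
      exact mul_le_mul_of_nonneg_left hea
        (mul_nonneg (Real.rpow_nonneg hτ0.le _) (Real.exp_pos _).le)
    refine step1.trans_eq ?_
    have h2 : (Real.exp 1 * ρ * τ / m) ^ (m : ℕ)
        = (Real.exp 1 * ρ / m) ^ (m : ℕ) * τ ^ (m : ℕ) := by
      rw [← mul_pow]
      congr 1
      ring
    have h3 : τ ^ (-γ) * τ⁻¹ * τ ^ (m : ℕ) = τ ^ ((m:ℝ) - γ - 1) := by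
      rw [← Real.rpow_natCast τ m, ← Real.rpow_neg_one τ, ← Real.rpow_add hτ0,
        ← Real.rpow_add hτ0]
      congr 1
      ring
    have h1 : Real.exp (-2*lam*τ) * Real.exp (-(ρ*τ)) = Real.exp (-((2*lam+ρ)*τ)) := by
      rw [← Real.exp_add]
      congr 1
      ring
    rw [h2]
    simp only [hGbdef, hC₁def]
    rw [← h3, ← h1, mul_inv]
    ring
  have hFint1 : IntegrableOn F (Ioc 0 c') := by
    refine Integrable.mono' (hGint.mono_set (Ioc_subset_Ioc_right hc'c))
      hFmeas.aestronglyMeasurable ?_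
    filter_upwards [ae_restrict_mem measurableSet_Ioc] with τ hτ
    rw [Real.norm_eq_abs, abs_of_nonneg (hFnonneg τ hτ.1)]
    exact hFG τ hτ
  have hI1 : ∫ τ in Ioc (0:ℝ) c', F τ ≤
      10 * (1 / ρ * (Real.exp 1 * ρ / m) ^ (m : ℕ) * (2 * lam + ρ) ^ (γ - (m : ℝ)) *
        lowerIncompleteGamma ((m : ℝ) - γ) ((2 * lam + ρ) * m / (2 * ρ))) := by
    have s1 : ∫ τ in Ioc (0:ℝ) c', F τ ≤ ∫ τ in Ioc (0:ℝ) c', C₁ * Gb τ := by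
      refine integral_mono_of_nonneg ?_ (hGint.mono_set (Ioc_subset_Ioc_right hc'c)) ?_
      · filter_upwards [ae_restrict_mem measurableSet_Ioc] with τ hτ
        exact hFnonneg τ hτ.1
      · filter_upwards [ae_restrict_mem measurableSet_Ioc] with τ hτ
        exact hFG τ hτ
    have s2 : ∫ τ in Ioc (0:ℝ) c', C₁ * Gb τ ≤ ∫ τ in Ioc (0:ℝ) c, C₁ * Gb τ := by
      refine setIntegral_mono_set hGint ?_ (HasSubset.Subset.eventuallyLE
        (Ioc_subset_Ioc_right hc'c))
      filter_upwards [ae_restrict_mem measurableSet_Ioc] with τ hτ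
      exact hGnonneg τ hτ
    have s3 : ∫ τ in Ioc (0:ℝ) c, C₁ * Gb τ
        = C₁ * ((2*lam+ρ) ^ (-((m:ℝ) - γ)) *
            lowerIncompleteGamma ((m:ℝ) - γ) ((2*lam+ρ) * c)) := by
      rw [integral_const_mul]
      congr 1
      exact gamma_scale ((m:ℝ) - γ) (2*lam+ρ) c (by linarith) hcpos.le
    have s4 : C₁ * ((2*lam+ρ) ^ (-((m:ℝ) - γ)) *
            lowerIncompleteGamma ((m:ℝ) - γ) ((2*lam+ρ) * c))
        = 10 * (1 / ρ * (Real.exp 1 * ρ / m) ^ (m : ℕ) * (2 * lam + ρ) ^ (γ - (m : ℝ)) *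
            lowerIncompleteGamma ((m : ℝ) - γ) ((2 * lam + ρ) * m / (2 * ρ))) := by
      rw [show -((m:ℝ) - γ) = γ - (m:ℝ) from by ring,
        show (2*lam+ρ) * c = (2 * lam + ρ) * (m:ℝ) / (2 * ρ) from by rw [hcdef]; ring,
        hC₁def]
      ring
    exact (s1.trans s2).trans_eq (s3.trans s4)
  -- Part II
  have hψint : IntegrableOn ψ (Ioi 0) := by
    have := gauss_integrable (2*lam) b₂ (by linarith) hb₂pos
    exact this
  have hψint2 : IntegrableOn (fun τ => (10 * D) * ψ τ) (Ioi 0) := hψint.const_mul (10 * D)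
  obtain ⟨hFint2, hI2⟩ : IntegrableOn F (Ioc c' M) ∧
      (∫ τ in Ioc c' M, F τ) ≤
        10 * (D * Real.sqrt (Real.pi / (2 * lam)) *
          Real.exp (-(2 * m * Real.sqrt (2 * lam / (5 * ρ))))) := by
    rcases le_or_gt c M with hcM | hMc
    · have hc'eq : c' = c := min_eq_left hcM
      have hFψ : ∀ τ ∈ Ioc c M, F τ ≤ (10 * D) * ψ τ := by
        intro τ hτ
        have hτ0 : (0:ℝ) < τ := hcpos.trans hτ.1
        have heb := hb τ hτ.1.le hτ.2
        have hmexp : (m:ℝ)^2/(5*ρ*τ) = b₂/τ := by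
          rw [hb₂def]
          field_simp
        have step1 : F τ ≤ τ ^ (-γ) * Real.exp (-2*lam*τ) * (10 * Real.exp (-(b₂/τ))) := by
          rw [hFdef, ← hmexp]
          exact mul_le_mul_of_nonneg_left heb
            (mul_nonneg (Real.rpow_nonneg hτ0.le _) (Real.exp_pos _).le)
        refine step1.trans ?_
        have hrw : τ ^ (-γ) * Real.exp (-2*lam*τ) * (10 * Real.exp (-(b₂/τ)))
            = 10 * (τ ^ (-γ) * Real.exp (-(2*lam*τ) - b₂/τ)) := by
          rw [show Real.exp (-(2*lam*τ) - b₂/τ)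
              = Real.exp (-2*lam*τ) * Real.exp (-(b₂/τ)) from by
            rw [← Real.exp_add]; congr 1; ring]
          ring
        rw [hrw]
        have hτpow : τ ^ (-γ) ≤ D * (Real.sqrt τ)⁻¹ := by
          have e1 : τ ^ (-γ) = τ ^ (-(γ - 1/2)) * τ ^ (-(1/2:ℝ)) := by
            rw [← Real.rpow_add hτ0]
            congr 1
            ring
          have e2 : τ ^ (-(γ - 1/2)) ≤ c ^ (-(γ - 1/2)) :=
            Real.rpow_le_rpow_of_nonpos hcpos hτ.1.le (by linarith)
          have e3 : c ^ (-(γ - 1/2)) = D := by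
            rw [Real.rpow_neg hcpos.le, ← Real.inv_rpow hcpos.le, hDdef, hcdef, inv_div]
          have e4 : τ ^ (-(1/2:ℝ)) = (Real.sqrt τ)⁻¹ := by
            rw [Real.rpow_neg hτ0.le, Real.sqrt_eq_rpow]
          calc τ ^ (-γ) = τ ^ (-(γ - 1/2)) * τ ^ (-(1/2:ℝ)) := e1
            _ ≤ c ^ (-(γ - 1/2)) * τ ^ (-(1/2:ℝ)) :=
              mul_le_mul_of_nonneg_right e2 (Real.rpow_nonneg hτ0.le _)
            _ = D * (Real.sqrt τ)⁻¹ := by rw [e3, e4]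
        have : τ ^ (-γ) * Real.exp (-(2*lam*τ) - b₂/τ)
            ≤ (D * (Real.sqrt τ)⁻¹) * Real.exp (-(2*lam*τ) - b₂/τ) :=
          mul_le_mul_of_nonneg_right hτpow (Real.exp_pos _).le
        rw [hψdef]
        calc 10 * (τ ^ (-γ) * Real.exp (-(2*lam*τ) - b₂/τ))
            ≤ 10 * ((D * (Real.sqrt τ)⁻¹) * Real.exp (-(2*lam*τ) - b₂/τ)) := by linarith
          _ = (10 * D) * ((Real.sqrt τ)⁻¹ * Real.exp (-(2*lam*τ) - b₂/τ)) := by ring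
      have hsub : Ioc c M ⊆ Ioi (0:ℝ) := fun τ hτ => hcpos.trans hτ.1
      have hint2 : IntegrableOn F (Ioc c M) := by
        refine Integrable.mono' (hψint2.mono_set hsub)
          hFmeas.aestronglyMeasurable ?_
        filter_upwards [ae_restrict_mem measurableSet_Ioc] with τ hτ
        rw [Real.norm_eq_abs, abs_of_nonneg (hFnonneg τ (hcpos.trans hτ.1))]
        exact hFψ τ hτ
      have hi2 : ∫ τ in Ioc c M, F τ ≤
          10 * (D * Real.sqrt (Real.pi / (2 * lam)) *
            Real.exp (-(2 * m * Real.sqrt (2 * lam / (5 * ρ))))) := by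
        have t1 : ∫ τ in Ioc c M, F τ ≤ ∫ τ in Ioc c M, (10 * D) * ψ τ := by
          refine integral_mono_of_nonneg ?_ (hψint2.mono_set hsub) ?_
          · filter_upwards [ae_restrict_mem measurableSet_Ioc] with τ hτ
            exact hFnonneg τ (hcpos.trans hτ.1)
          · filter_upwards [ae_restrict_mem measurableSet_Ioc] with τ hτ
            exact hFψ τ hτ
        have t2 : ∫ τ in Ioc c M, (10 * D) * ψ τ ≤ ∫ τ in Ioi (0:ℝ), (10 * D) * ψ τ := by
          refine setIntegral_mono_set hψint2
            (ae_of_all _ fun τ => mul_nonneg (by positivity) (hψnonneg τ))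
            (HasSubset.Subset.eventuallyLE hsub)
        have t3 : ∫ τ in Ioi (0:ℝ), (10 * D) * ψ τ
            = (10 * D) * ∫ τ in Ioi (0:ℝ), ψ τ := integral_const_mul _ _
        have t4 : ∫ τ in Ioi (0:ℝ), ψ τ ≤
            Real.sqrt (π / (2*lam)) * Real.exp (-(2 * Real.sqrt ((2*lam) * b₂))) := by
          have := gauss_bound (2*lam) b₂ (by linarith) hb₂pos
          exact this
        have hs : Real.sqrt ((2*lam) * b₂) = (m:ℝ) * Real.sqrt (2*lam/(5*ρ)) := by
          rw [show (2*lam) * b₂ = (m:ℝ)^2 * (2*lam/(5*ρ)) from by rw [hb₂def]; ring,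
            Real.sqrt_mul (by positivity), Real.sqrt_sq hmR.le]
        have t5 : (10 * D) * (Real.sqrt (π / (2*lam)) *
              Real.exp (-(2 * Real.sqrt ((2*lam) * b₂))))
            = 10 * (D * Real.sqrt (Real.pi / (2 * lam)) *
              Real.exp (-(2 * m * Real.sqrt (2 * lam / (5 * ρ))))) := by
          rw [hs, show -(2 * ((m:ℝ) * Real.sqrt (2*lam/(5*ρ))))
            = -(2 * (m:ℝ) * Real.sqrt (2*lam/(5*ρ))) from by ring]
          ring
        calc ∫ τ in Ioc c M, F τ ≤ ∫ τ in Ioi (0:ℝ), (10 * D) * ψ τ := t1.trans t2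
          _ = (10 * D) * ∫ τ in Ioi (0:ℝ), ψ τ := t3
          _ ≤ (10 * D) * (Real.sqrt (π / (2*lam)) *
              Real.exp (-(2 * Real.sqrt ((2*lam) * b₂)))) :=
            mul_le_mul_of_nonneg_left t4 (by positivity)
          _ = _ := t5
      rw [hc'eq]
      exact ⟨hint2, hi2⟩
    · have hc'eq : c' = M := min_eq_right hMc.le
      rw [hc'eq, Ioc_self]
      constructor
      · exact integrableOn_empty
      · rw [Measure.restrict_empty, integral_zero_measure]
        positivity
  -- combine
  have hsplit : ∫ τ in Ioc (0:ℝ) M, F τ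
      = (∫ τ in Ioc (0:ℝ) c', F τ) + ∫ τ in Ioc c' M, F τ := by
    rw [← Ioc_union_Ioc_eq_Ioc hc'pos.le hc'M]
    exact setIntegral_union (Ioc_disjoint_Ioc_of_le le_rfl) measurableSet_Ioc hFint1 hFint2
  rw [hsplit]
  linarith [hI1, hI2]
end
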